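/- arXiv:2102.12733 — 9 statements merged into one kernel-verified Lean document; each statement's English description precedes it below -/
import Mathlib

section
/- Let H be a real inner product space, ρ > 0 a real number, and θ₊, γ₊, θ⋆, λ, λ₊ ∈ H. Assume (i) λ₊ = λ + ρ·(θ₊ − γ₊) and (ii) ⟨λ₊, θ⋆ − γ₊⟩ ≤ 0. Then −⟨λ₊, θ₊ − θ⋆⟩ + (ρ/2)·‖θ₊ − γ₊‖² ≤ (1/(2ρ))·(‖λ‖² − ‖λ₊‖²). -/
open scoped InnerProductSpace

/-- Dual-variable (multiplier) step in the proof of Lemma 2 of the paper. -/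
theorem admm_multiplier_step
    {H : Type*} [NormedAddCommGroup H] [InnerProductSpace ℝ H]
    (ρ : ℝ) (hρ : 0 < ρ)
    (θp γp θs lam lamp : H)
    (h1 : lamp = lam + ρ • (θp - γp))
    (h2 : ⟪lamp, θs - γp⟫_ℝ ≤ 0) :
    -⟪lamp, θp - θs⟫_ℝ + (ρ / 2) * ‖θp - γp‖ ^ 2 ≤
      (1 / (2 * ρ)) * (‖lam‖ ^ 2 - ‖lamp‖ ^ 2) := by
  have hne : ρ ≠ 0 := hρ.ne'
  have key : θp - γp = ρ⁻¹ • (lamp - lam) := by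
    rw [h1]; simp [smul_smul, inv_mul_cancel₀ hne]
  have hsplit : (θp - θs : H) = (θp - γp) - (θs - γp) := by abel
  have e1 : ⟪lamp, θp - θs⟫_ℝ = ρ⁻¹ * ⟪lamp, lamp - lam⟫_ℝ - ⟪lamp, θs - γp⟫_ℝ := by
    rw [hsplit, inner_sub_right, key, real_inner_smul_right]
  have e2 : ‖θp - γp‖ ^ 2 = ρ⁻¹ ^ 2 * ‖lamp - lam‖ ^ 2 := by
    rw [key, norm_smul, mul_pow, Real.norm_eq_abs, abs_of_pos (inv_pos.mpr hρ)]
  have e3 : ⟪lamp, lamp - lam⟫_ℝ = ‖lamp‖ ^ 2 - ⟪lamp, lam⟫_ℝ := by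
    rw [inner_sub_right, real_inner_self_eq_norm_sq]
  have e4 : ‖lamp - lam‖ ^ 2 = ‖lamp‖ ^ 2 - 2 * ⟪lamp, lam⟫_ℝ + ‖lam‖ ^ 2 := by
    rw [norm_sub_sq_real]
  rw [e1, e2, e3, e4]
  have h5 : ρ⁻¹ * ρ = 1 := inv_mul_cancel₀ hne
  have hpos : (0:ℝ) < 2 * ρ := by linarith
  rw [show (1:ℝ)/(2*ρ) = ρ⁻¹/2 by field_simp, show ρ/2 * (ρ⁻¹^2 * (‖lamp‖ ^ 2 - 2 * ⟪lamp, lam⟫_ℝ + ‖lam‖ ^ 2)) = ρ⁻¹/2 * (‖lamp‖ ^ 2 - 2 * ⟪lamp, lam⟫_ℝ + ‖lam‖ ^ 2) by field_simp]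
  nlinarith [mul_nonneg (mul_nonneg hρ.le hρ.le) (neg_nonneg.mpr h2), sq_nonneg ρ]
end

section
/- (Lemma 2) Work in a real inner product space H. Fix reals ρ > 0 and η > 0. Let θ̂_t, θ̂_{t+1}, γ̂_t, γ̂_{t+1}, λ̂_t, λ̂_{t+1}, θ⋆ ∈ H and let L : H → ℝ satisfy: (R1) L is convex and differentiable at θ̂_{t+1} with gradient ∇L(θ̂_{t+1}) = −λ̂_{t+1} − ρ·(γ̂_{t+1} − γ̂_t) − η·(θ̂_{t+1} − θ̂_t); (R2) λ̂_{t+1} = λ̂_t + ρ·(θ̂_{t+1} − γ̂_{t+1}); (R3) ⟨λ̂_{t+1}, θ⋆ − γ̂_{t+1}⟩ ≤ 0. Then L(θ̂_{t+1}) − L(θ⋆) ≤ (1/(2ρ))·(‖λ̂_t‖² − ‖λ̂_{t+1}‖²) − (ρ/2)·‖θ̂_{t+1} − γ̂_t‖² + (η/2)·(‖θ̂_t − θ⋆‖² − ‖θ̂_{t+1} − θ⋆‖²) − (η/2)·‖θ̂_{t+1} − θ̂_t‖² + (ρ/2)·(‖γ̂_t − θ⋆‖² − ‖γ̂_{t+1}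 − θ⋆‖²). -/
open scoped InnerProductSpace
open Filter Set
open scoped Topology

/-- First-order condition for a convex differentiable function. -/
lemma convex_grad_le
    {H : Type*} [NormedAddCommGroup H] [InnerProductSpace ℝ H] [CompleteSpace H]
    {L : H → ℝ} {g x : H} (hconv : ConvexOn ℝ Set.univ L)
    (hg : HasGradientAt L g x) (y : H) :
    ⟪g, y - x⟫_ℝ ≤ L y - L x := by
  set φ : ℝ → ℝ := fun t => L (x + t • (y - x)) with hφ
  have hline : HasDerivAt (fun t : ℝ => x + t • (y - x)) (y - x) 0 := by
    simpa using ((hasDerivAt_id (0:ℝ)).smul_const (y - x)).const_add x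
  have hd : HasDerivAt φ ⟪g, y - x⟫_ℝ 0 := by
    have h0 : x = x + (0:ℝ) • (y - x) := by simp
    have hfd : HasFDerivAt L ((InnerProductSpace.toDual ℝ H) g) (x + (0:ℝ) • (y - x)) :=
      h0 ▸ hg.hasFDerivAt
    have := hfd.comp_hasDerivAt 0 hline
    rw [InnerProductSpace.toDual_apply_apply] at this
    exact this
  have hslope : Tendsto (slope φ 0) (𝓝[>] (0:ℝ)) (𝓝 ⟪g, y - x⟫_ℝ) :=
    (hasDerivAt_iff_tendsto_slope.mp hd).mono_left
      (nhdsWithin_mono _ (fun t ht => by exact ne_of_gt ht))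
  have hev : ∀ᶠ t in 𝓝[>] (0:ℝ), slope φ 0 t ≤ L y - L x := by
    filter_upwards [Ioc_mem_nhdsGT_of_mem (by norm_num : (0:ℝ) ∈ Ico 0 1)] with t ht
    obtain ⟨ht0, ht1⟩ := ht
    have hcomb : x + t • (y - x) = (1 - t) • x + t • y := by
      module
    have hLt : φ t ≤ (1 - t) * L x + t * L y := by
      rw [hφ]; simp only [hcomb]
      exact hconv.2 (mem_univ x) (mem_univ y) (by linarith) (le_of_lt ht0) (by ring)
    have hφ0 : φ 0 = L x := by simp [hφ]
    rw [slope_def_field, sub_zero, div_le_iff₀ ht0, hφ0]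
    nlinarith [hLt]
  exact le_of_tendsto hslope hev

/-- Lemma 2 of the paper: per-step ADMM inequality. -/
theorem domkl_lemma2
    {H : Type*} [NormedAddCommGroup H] [InnerProductSpace ℝ H] [CompleteSpace H]
    (ρ η : ℝ) (hρ : 0 < ρ) (hη : 0 < η)
    (θt θt1 γt γt1 lamt lamt1 θs : H) (L : H → ℝ)
    (hconv : ConvexOn ℝ Set.univ L)
    (hgrad : HasGradientAt L (-lamt1 - ρ • (γt1 - γt) - η • (θt1 - θt)) θt1)
    (hR2 : lamt1 = lamt + ρ • (θt1 - γt1))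
    (hR3 : ⟪lamt1, θs - γt1⟫_ℝ ≤ 0) :
    L θt1 - L θs ≤
      (1 / (2 * ρ)) * (‖lamt‖ ^ 2 - ‖lamt1‖ ^ 2)
        - (ρ / 2) * ‖θt1 - γt‖ ^ 2
        + (η / 2) * (‖θt - θs‖ ^ 2 - ‖θt1 - θs‖ ^ 2)
        - (η / 2) * ‖θt1 - θt‖ ^ 2
        + (ρ / 2) * (‖γt - θs‖ ^ 2 - ‖γt1 - θs‖ ^ 2) := by
  set g : H := -lamt1 - ρ • (γt1 - γt) - η • (θt1 - θt) with hg
  have hfo : ⟪g, θs - θt1⟫_ℝ ≤ L θs - L θt1 := convex_grad_le hconv hgrad θs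
  have hfo' : L θt1 - L θs ≤ ⟪g, θt1 - θs⟫_ℝ := by
    have : ⟪g, θt1 - θs⟫_ℝ = -⟪g, θs - θt1⟫_ℝ := by
      rw [← inner_neg_right]; congr 1; abel
    linarith [hfo, this.ge, this.le]
  have h1 : ⟪g, θt1 - θs⟫_ℝ
      = -⟪lamt1, θt1 - θs⟫_ℝ - ρ * ⟪γt1 - γt, θt1 - θs⟫_ℝ
        - η * ⟪θt1 - θt, θt1 - θs⟫_ℝ := by
    rw [hg]; simp [inner_sub_left, inner_neg_left, real_inner_smul_left]
    try ring
  have h2 : ⟪lamt1, θt1 - θs⟫_ℝ = ⟪lamt1, θt1 - γt1⟫_ℝ - ⟪lamt1, θs - γt1⟫_ℝ := by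
    rw [← inner_sub_right]; congr 1; abel
  have hlamnorm : ‖lamt‖ ^ 2
      = ‖lamt1‖ ^ 2 - 2 * (ρ * ⟪lamt1, θt1 - γt1⟫_ℝ) + ρ ^ 2 * ‖θt1 - γt1‖ ^ 2 := by
    have hlamt : lamt = lamt1 - ρ • (θt1 - γt1) := by rw [hR2]; abel
    rw [hlamt, norm_sub_sq_real, real_inner_smul_right, norm_smul]
    rw [Real.norm_eq_abs, abs_of_pos hρ]
    ring
  have h3 : (1 / (2 * ρ)) * (‖lamt‖ ^ 2 - ‖lamt1‖ ^ 2)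
      = -⟪lamt1, θt1 - γt1⟫_ℝ + (ρ / 2) * ‖θt1 - γt1‖ ^ 2 := by
    rw [hlamnorm]; field_simp; ring
  have polar : ∀ a b c : H, ⟪a - b, a - c⟫_ℝ
      = (‖a - b‖ ^ 2 + ‖a - c‖ ^ 2 - ‖b - c‖ ^ 2) / 2 := by
    intro a b c
    have hbc : b - c = (a - c) - (a - b) := by abel
    have := norm_sub_sq_real (a - c) (a - b)
    rw [← hbc, real_inner_comm] at this
    linarith
  have h4 : η * ⟪θt1 - θt, θt1 - θs⟫_ℝ
      = (η / 2) * (‖θt1 - θt‖ ^ 2 + ‖θt1 - θs‖ ^ 2 - ‖θt - θs‖ ^ 2) := by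
    rw [polar]; ring
  have h5a : ⟪γt1 - γt, θt1 - θs⟫_ℝ
      = ⟪γt1 - γt, θt1 - γt1⟫_ℝ + ⟪γt1 - γt, γt1 - θs⟫_ℝ := by
    rw [← inner_add_right]; congr 1; abel
  have h5b : ⟪γt1 - γt, γt1 - θs⟫_ℝ
      = (‖γt1 - γt‖ ^ 2 + ‖γt1 - θs‖ ^ 2 - ‖γt - θs‖ ^ 2) / 2 := polar γt1 γt θs
  have h5 : ρ * ⟪γt1 - γt, θt1 - θs⟫_ℝ
      = ρ * ⟪γt1 - γt, θt1 - γt1⟫_ℝ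
        + (ρ / 2) * (‖γt1 - γt‖ ^ 2 + ‖γt1 - θs‖ ^ 2 - ‖γt - θs‖ ^ 2) := by
    rw [h5a, h5b]; ring
  have h6base : ‖θt1 - γt‖ ^ 2
      = ‖θt1 - γt1‖ ^ 2 + 2 * ⟪γt1 - γt, θt1 - γt1⟫_ℝ + ‖γt1 - γt‖ ^ 2 := by
    have hsum : θt1 - γt = (θt1 - γt1) + (γt1 - γt) := by abel
    rw [hsum, norm_add_sq_real, real_inner_comm]
    try ring
  have h6 : ρ * ‖θt1 - γt‖ ^ 2
      = ρ * ‖θt1 - γt1‖ ^ 2 + 2 * (ρ * ⟪γt1 - γt, θt1 - γt1⟫_ℝ)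
        + ρ * ‖γt1 - γt‖ ^ 2 := by rw [h6base]; ring
  rw [h3]
  linarith [hfo', h1, h2, h4, h5, h6, hR3]
end

section
/- Work in a real inner product space H. Fix reals ρ > 0 and η > 0. Let θ̂_t, θ̂_{t+1}, γ̂_t, γ̂_{t+1}, λ̂_t, λ̂_{t+1}, θ⋆ ∈ H and let L : H → ℝ be convex and differentiable at both θ̂_t and θ̂_{t+1}, satisfying the per-step relations (R1) ∇L(θ̂_{t+1}) = −λ̂_{t+1} − ρ·(γ̂_{t+1} − γ̂_t) − η·(θ̂_{t+1} − θ̂_t); (R2) λ̂_{t+1} = λ̂_t + ρ·(θ̂_{t+1} − γ̂_{t+1}); (R3) ⟨λ̂_{t+1}, θ⋆ − γ̂_{t+1}⟩ ≤ 0. Then L(θ̂_t) − L(θ⋆) ≤ (1/(2ρ))·(‖λ̂_t‖² − ‖λ̂_{t+1}‖²) + (1/(2η))·‖∇L(θ̂_t)‖² + (ρ/2)·(‖γ̂_t − θ⋆‖² − ‖γ̂_{t+1} − θ⋆‖²) + (η/2)·(‖θ̂_t − θ⋆‖² − ‖θ̂_{t+1} − θ⋆‖²). -/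
open scoped InnerProductSpace

/-- Subgradient inequality for a convex differentiable function. -/
lemma domkl_grad_convex_le
    {H : Type*} [NormedAddCommGroup H] [InnerProductSpace ℝ H] [CompleteSpace H]
    {L : H → ℝ} {g x : H} (hconv : ConvexOn ℝ Set.univ L) (hg : HasGradientAt L g x)
    (y : H) : L x + ⟪g, y - x⟫_ℝ ≤ L y := by
  set A : ℝ →ᵃ[ℝ] H := AffineMap.lineMap x y with hA
  have hf : ConvexOn ℝ Set.univ (L ∘ A) := by
    have := hconv.comp_affineMap A
    simpa using this
  have hAderiv : HasDerivAt (fun t : ℝ => A t) (y - x) 0 := by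
    have h1 : HasDerivAt (fun t : ℝ => t • (y - x) + x) ((1 : ℝ) • (y - x)) 0 :=
      ((hasDerivAt_id (0 : ℝ)).smul_const (y - x)).add_const x
    simp only [one_smul] at h1
    simpa [hA, AffineMap.lineMap_apply] using h1
  have hA0 : A 0 = x := by simp [hA]
  have hderiv : HasDerivAt (L ∘ A) (⟪g, y - x⟫_ℝ) 0 := by
    have := (hA0 ▸ hg.hasFDerivAt).comp_hasDerivAt 0 hAderiv
    simpa using this
  have hslope := hf.le_slope_of_hasDerivAt (Set.mem_univ (0 : ℝ)) (Set.mem_univ (1 : ℝ))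
    zero_lt_one hderiv
  have hs : slope (L ∘ A) 0 1 = L y - L x := by
    simp [slope_def_field, hA]
  rw [hs] at hslope
  linarith

/-- Per-step regret inequality: Lemma 2 combined with convexity and Fenchel–Young. -/
theorem domkl_per_step_regret
    {H : Type*} [NormedAddCommGroup H] [InnerProductSpace ℝ H] [CompleteSpace H]
    (ρ η : ℝ) (hρ : 0 < ρ) (hη : 0 < η)
    (θt θt1 γt γt1 lamt lamt1 θs : H) (L : H → ℝ) (g : H)
    (hconv : ConvexOn ℝ Set.univ L)
    (hgradt : HasGradientAt L g θt)
    (hgradt1 : HasGradientAt L (-lamt1 - ρ • (γt1 - γt) - η • (θt1 - θt)) θt1)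
    (hR2 : lamt1 = lamt + ρ • (θt1 - γt1))
    (hR3 : ⟪lamt1, θs - γt1⟫_ℝ ≤ 0) :
    L θt - L θs ≤
      (1 / (2 * ρ)) * (‖lamt‖ ^ 2 - ‖lamt1‖ ^ 2)
        + (1 / (2 * η)) * ‖g‖ ^ 2
        + (ρ / 2) * (‖γt - θs‖ ^ 2 - ‖γt1 - θs‖ ^ 2)
        + (η / 2) * (‖θt - θs‖ ^ 2 - ‖θt1 - θs‖ ^ 2) := by
  have h1 := domkl_grad_convex_le hconv hgradt θt1
  have h2 := domkl_grad_convex_le hconv hgradt1 θs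
  have hlamt : lamt = lamt1 - ρ • (θt1 - γt1) := by rw [hR2]; abel
  -- The key algebraic identity with explicit nonnegative slack terms.
  have key :
      (⟪g, θt1 - θt⟫_ℝ * (-1) + (- ⟪(-lamt1 - ρ • (γt1 - γt) - η • (θt1 - θt)), θs - θt1⟫_ℝ))
        ≤ (1 / (2 * ρ)) * (‖lamt‖ ^ 2 - ‖lamt1‖ ^ 2)
          + (1 / (2 * η)) * ‖g‖ ^ 2
          + (ρ / 2) * (‖γt - θs‖ ^ 2 - ‖γt1 - θs‖ ^ 2)
          + (η / 2) * (‖θt - θs‖ ^ 2 - ‖θt1 - θs‖ ^ 2) := by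
    have hid :
        (1 / (2 * ρ)) * (‖lamt‖ ^ 2 - ‖lamt1‖ ^ 2)
          + (1 / (2 * η)) * ‖g‖ ^ 2
          + (ρ / 2) * (‖γt - θs‖ ^ 2 - ‖γt1 - θs‖ ^ 2)
          + (η / 2) * (‖θt - θs‖ ^ 2 - ‖θt1 - θs‖ ^ 2)
          - (⟪g, θt1 - θt⟫_ℝ * (-1)
              + (- ⟪(-lamt1 - ρ • (γt1 - γt) - η • (θt1 - θt)), θs - θt1⟫_ℝ))
        = (1 / (2 * η)) * ‖g - η • (θt - θt1)‖ ^ 2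
          + (1 / (2 * ρ)) * ‖ρ • (θt1 - γt1) + ρ • (γt1 - γt)‖ ^ 2
          - ⟪lamt1, θs - γt1⟫_ℝ := by
      rw [hlamt]
      simp only [@norm_sub_pow_two_real, @norm_add_pow_two_real, inner_sub_left,
        inner_sub_right, inner_add_left, inner_add_right, inner_smul_left, inner_smul_right,
        inner_neg_left, inner_neg_right, real_inner_self_eq_norm_sq, RCLike.ofReal_real_eq_id, conj_trivial,
        norm_smul, Real.norm_eq_abs, mul_pow, sq_abs,
        id_eq, real_inner_comm θt1 γt1, real_inner_comm θt1 γt, real_inner_comm θt1 θt,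
        real_inner_comm θt1 θs, real_inner_comm θt1 lamt1, real_inner_comm θt1 g,
        real_inner_comm γt1 γt, real_inner_comm γt1 θt, real_inner_comm γt1 θs,
        real_inner_comm γt1 lamt1, real_inner_comm γt1 g, real_inner_comm γt θt,
        real_inner_comm γt θs, real_inner_comm γt lamt1, real_inner_comm γt g,
        real_inner_comm θt θs, real_inner_comm θt lamt1, real_inner_comm θt g,
        real_inner_comm θs lamt1, real_inner_comm θs g, real_inner_comm lamt1 g]
      field_simp
      ring
    have hnn1 : 0 ≤ (1 / (2 * η)) * ‖g - η • (θt - θt1)‖ ^ 2 := by positivity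
    have hnn2 : 0 ≤ (1 / (2 * ρ)) * ‖ρ • (θt1 - γt1) + ρ • (γt1 - γt)‖ ^ 2 := by positivity
    linarith
  have h1' : L θt - L θt1 ≤ ⟪g, θt1 - θt⟫_ℝ * (-1) := by linarith
  have h2' : L θt1 - L θs ≤ - ⟪(-lamt1 - ρ • (γt1 - γt) - η • (θt1 - θt)), θs - θt1⟫_ℝ := by
    linarith
  linarith
end

section
/- (Theorem 1, learning-accuracy part, non-asymptotic form) Work in a real inner product space H. Fix an integer T ≥ 1 and reals ρ > 0, η > 0, C ≥ 0, G ≥ 0. Let L_1, …, L_T : H → ℝ be loss functions, let θ̂_1, …, θ̂_{T+1}, γ̂_1, …, γ̂_{T+1}, λ̂_1, …, λ̂_{T+1} ∈ H and θ⋆ ∈ H. Assume that for every t ∈ {1, …, T}: L_t is convex and differentiable at both θ̂_t and θ̂_{t+1}, and the per-step relations hold: (R1) ∇L_t(θ̂_{t+1}) = −λ̂_{t+1} − ρ·(γ̂_{t+1} − γ̂_t) − η·(θ̂_{t+1} − θ̂_t); (R2) λ̂_{t+1} = λ̂_t + ρ·(θ̂_{t+1} − γ̂_{t+1}); (R3)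 ⟨λ̂_{t+1}, θ⋆ − γ̂_{t+1}⟩ ≤ 0; and the gradient bound ‖∇L_t(θ̂_t)‖² ≤ G. Assume further λ̂_1 = 0, ‖γ̂_1 − θ⋆‖² ≤ C, and ‖θ̂_1 − θ⋆‖² ≤ C. Then Σ_{t=1}^{T} (L_t(θ̂_t) − L_t(θ⋆)) ≤ (ρ/2)·C + (η/2)·C + T·G/(2η). -/
open scoped InnerProductSpace

lemma convex_grad_ineq {H : Type*} [NormedAddCommGroup H] [InnerProductSpace ℝ H] [CompleteSpace H]
    {f : H → ℝ} {g x : H}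
    (hf : ConvexOn ℝ Set.univ f) (hg : HasGradientAt f g x) (y : H) :
    f x + ⟪g, y - x⟫_ℝ ≤ f y := by
  have hc : HasDerivAt (fun s : ℝ => x + s • (y - x)) (y - x) 0 := by
    simpa using ((hasDerivAt_id (0:ℝ)).smul_const (y - x)).const_add x
  have hφ : HasDerivAt (fun s : ℝ => f (x + s • (y - x))) ⟪g, y - x⟫_ℝ 0 := by
    have hg' : HasFDerivAt f ((InnerProductSpace.toDual ℝ H) g) (x + (0:ℝ) • (y - x)) := by
      simpa using hg.hasFDerivAt
    have := hg'.comp_hasDerivAt 0 hc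
    simp at this
    exact this
  have hslope := hasDerivAt_iff_tendsto_slope.mp hφ
  have hslope' : Filter.Tendsto (slope (fun s : ℝ => f (x + s • (y - x))) 0)
      (nhdsWithin 0 (Set.Ioi 0)) (nhds ⟪g, y - x⟫_ℝ) :=
    hslope.mono_left (nhdsWithin_mono 0 (fun s hs => ne_of_gt hs))
  have key : ⟪g, y - x⟫_ℝ ≤ f y - f x := by
    refine le_of_tendsto hslope' ?_
    filter_upwards [Ioo_mem_nhdsGT_of_mem (by norm_num : (0:ℝ) ∈ Set.Ico 0 1)] with s hs
    obtain ⟨hs0, hs1⟩ := hs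
    have hcomb := hf.2 (Set.mem_univ x) (Set.mem_univ y) (by linarith : (0:ℝ) ≤ 1 - s)
      (le_of_lt hs0) (by ring)
    have heq : x + s • (y - x) = (1 - s) • x + s • y := by
      simp [smul_sub, sub_smul]; abel
    have hle : f (x + s • (y - x)) ≤ (1 - s) * f x + s * f y := by
      rw [heq]; simpa [smul_eq_mul] using hcomb
    simp only [slope_def_field, slope_def_module, zero_smul, add_zero, sub_zero]
    rw [div_le_iff₀ hs0]
    nlinarith
  linarith

lemma step_algebra {H : Type*} [NormedAddCommGroup H] [InnerProductSpace ℝ H]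
    (ρ η : ℝ) (hρ : 0 < ρ) (a b c d m : H) (hd : 0 ≤ ⟪m, d⟫_ℝ) :
    ⟪-m - ρ • (d - c) - η • (b - a), b⟫_ℝ + (η/2) * ‖a - b‖^2 ≤
      (η/2) * (‖a‖^2 - ‖b‖^2) + (ρ/2) * (‖c‖^2 - ‖d‖^2)
      + (1/(2*ρ)) * (‖m - ρ • (b - d)‖^2 - ‖m‖^2) := by
  have hbc : (0:ℝ) ≤ ⟪b - c, b - c⟫_ℝ := real_inner_self_nonneg
  have key : (1/(2*ρ)) * (‖m - ρ • (b - d)‖^2 - ‖m‖^2)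
      = -⟪m, b - d⟫_ℝ + (ρ/2) * ‖b - d‖^2 := by
    simp only [← real_inner_self_eq_norm_sq, inner_sub_left, inner_sub_right,
      real_inner_smul_left, real_inner_smul_right]
    have h3 := real_inner_comm b d
    have h4 := real_inner_comm m b
    have h5 := real_inner_comm m d
    field_simp
    ring_nf
    nlinarith [h3, h4, h5]
  rw [key]
  simp only [← real_inner_self_eq_norm_sq, inner_sub_left, inner_sub_right,
    inner_add_left, real_inner_smul_left, inner_neg_left] at *
  have h1 := real_inner_comm b a
  have h2 := real_inner_comm b c
  have h3 := real_inner_comm b d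
  rw [h2] at hbc
  rw [h1, h3]
  nlinarith [mul_nonneg hρ.le hbc, hd]

/-- Theorem 1 of the paper, learning-accuracy part, non-asymptotic form. -/
theorem domkl_thm1_accuracy
    {H : Type*} [NormedAddCommGroup H] [InnerProductSpace ℝ H] [CompleteSpace H]
    (T : ℕ) (hT : 1 ≤ T)
    (ρ η C G : ℝ) (hρ : 0 < ρ) (hη : 0 < η) (hC : 0 ≤ C) (hG : 0 ≤ G)
    (L : ℕ → H → ℝ) (θ γ' lam g : ℕ → H) (θs : H)
    (hconv : ∀ t ∈ Finset.Icc 1 T, ConvexOn ℝ Set.univ (L t))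
    (hgradt : ∀ t ∈ Finset.Icc 1 T, HasGradientAt (L t) (g t) (θ t))
    (hgradt1 : ∀ t ∈ Finset.Icc 1 T,
      HasGradientAt (L t)
        (-(lam (t + 1)) - ρ • (γ' (t + 1) - γ' t) - η • (θ (t + 1) - θ t)) (θ (t + 1)))
    (hR2 : ∀ t ∈ Finset.Icc 1 T, lam (t + 1) = lam t + ρ • (θ (t + 1) - γ' (t + 1)))
    (hR3 : ∀ t ∈ Finset.Icc 1 T, ⟪lam (t + 1), θs - γ' (t + 1)⟫_ℝ ≤ 0)
    (hgbound : ∀ t ∈ Finset.Icc 1 T, ‖g t‖ ^ 2 ≤ G)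
    (hlam1 : lam 1 = 0)
    (hγ1 : ‖γ' 1 - θs‖ ^ 2 ≤ C)
    (hθ1 : ‖θ 1 - θs‖ ^ 2 ≤ C) :
    ∑ t ∈ Finset.Icc 1 T, (L t (θ t) - L t θs) ≤
      (ρ / 2) * C + (η / 2) * C + (T : ℝ) * G / (2 * η) := by
  obtain ⟨F, hF⟩ : ∃ F : ℕ → ℝ, ∀ t, F t =
      (η/2) * ‖θ t - θs‖^2 + (ρ/2) * ‖γ' t - θs‖^2 + (1/(2*ρ)) * ‖lam t‖^2 :=
    ⟨_, fun _ => rfl⟩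
  -- per-step bound
  have step : ∀ t ∈ Finset.Icc 1 T,
      L t (θ t) - L t θs ≤ G/(2*η) + (F t - F (t+1)) := by
    intro t ht
    set a := θ t - θs
    set b := θ (t+1) - θs
    set c := γ' t - θs
    set d := γ' (t+1) - θs
    set m := lam (t+1) with hm
    have hba : b - a = θ (t+1) - θ t := by simp [a, b, sub_sub_sub_cancel_right]
    have hdc : d - c = γ' (t+1) - γ' t := by simp [c, d, sub_sub_sub_cancel_right]
    have hbd : b - d = θ (t+1) - γ' (t+1) := by simp [b, d, sub_sub_sub_cancel_right]
    -- convexity at θ (t+1)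
    have hg1 : L t (θ (t+1)) - L t θs ≤ ⟪-m - ρ • (d - c) - η • (b - a), b⟫_ℝ := by
      have := convex_grad_ineq (hconv t ht) (hgradt1 t ht) θs
      have hneg : θs - θ (t+1) = -b := by simp [b]
      rw [hneg, inner_neg_right] at this
      rw [hba, hdc, hm]
      linarith
    -- convexity at θ t
    have hg2 : L t (θ t) - L t (θ (t+1)) ≤ ⟪g t, a - b⟫_ℝ := by
      have := convex_grad_ineq (hconv t ht) (hgradt t ht) (θ (t+1))
      have hneg : θ (t+1) - θ t = -(a - b) := by rw [neg_sub, hba]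
      rw [hneg, inner_neg_right] at this
      linarith
    -- Cauchy–Schwarz + AM–GM
    have hCS : ⟪g t, a - b⟫_ℝ ≤ G/(2*η) + (η/2) * ‖a - b‖^2 := by
      have h1 : ⟪g t, a - b⟫_ℝ ≤ ‖g t‖ * ‖a - b‖ := real_inner_le_norm _ _
      have h2 := hgbound t ht
      have h3 := sq_nonneg (‖g t‖ - η * ‖a - b‖)
      have hpos : (0:ℝ) < 2*η := by linarith
      have key : (‖g t‖ * ‖a - b‖) * (2*η) ≤ G + η^2 * ‖a - b‖^2 := by nlinarith
      have h5 : G/(2*η) + (η/2) * ‖a - b‖^2 = (G + η^2 * ‖a - b‖^2)/(2*η) := by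
        field_simp
      rw [h5]
      exact h1.trans ((le_div_iff₀ hpos).mpr key)
    -- algebra
    have hd0 : 0 ≤ ⟪m, d⟫_ℝ := by
      have := hR3 t ht
      have hneg : θs - γ' (t+1) = -d := by simp [d]
      rw [hneg, inner_neg_right] at this
      linarith
    have hlamt : lam t = m - ρ • (b - d) := by
      rw [hbd, hm, hR2 t ht]; abel
    have halg := step_algebra ρ η hρ a b c d m hd0
    rw [← hlamt] at halg
    have hFt : F t - F (t+1) = (η/2) * (‖a‖^2 - ‖b‖^2) + (ρ/2) * (‖c‖^2 - ‖d‖^2)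
        + (1/(2*ρ)) * (‖lam t‖^2 - ‖m‖^2) := by
      rw [hF t, hF (t+1)]; ring
    linarith
  -- sum up
  have hsum : ∑ t ∈ Finset.Icc 1 T, (L t (θ t) - L t θs) ≤
      ∑ t ∈ Finset.Icc 1 T, (G/(2*η) + (F t - F (t+1))) := Finset.sum_le_sum step
  have tel : ∀ n : ℕ, ∑ t ∈ Finset.Icc 1 n, (F t - F (t+1)) = F 1 - F (n+1) := by
    intro n
    induction n with
    | zero => simp
    | succ k ih =>
      rw [Finset.sum_Icc_succ_top (Nat.succ_le_succ (Nat.zero_le k)), ih]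
      ring
  have hcard : (Finset.Icc 1 T).card = T := by
    rw [Nat.card_Icc]
    omega
  have hsum2 : ∑ t ∈ Finset.Icc 1 T, (G/(2*η) + (F t - F (t+1)))
      = (T : ℝ) * (G/(2*η)) + (F 1 - F (T+1)) := by
    rw [Finset.sum_add_distrib, tel, Finset.sum_const, hcard, nsmul_eq_mul]
  have hFT : 0 ≤ F (T+1) := by
    have h1 : (0:ℝ) ≤ (η/2) * ‖θ (T+1) - θs‖^2 := by positivity
    have h2 : (0:ℝ) ≤ (ρ/2) * ‖γ' (T+1) - θs‖^2 := by positivity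
    have h3 : (0:ℝ) ≤ (1/(2*ρ)) * ‖lam (T+1)‖^2 := by positivity
    rw [hF (T+1)]; linarith
  have hF1 : F 1 ≤ (η/2) * C + (ρ/2) * C := by
    rw [hF 1, hlam1, norm_zero]
    have h1 : (η/2) * ‖θ 1 - θs‖^2 ≤ (η/2) * C :=
      mul_le_mul_of_nonneg_left hθ1 (by linarith)
    have h2 : (ρ/2) * ‖γ' 1 - θs‖^2 ≤ (ρ/2) * C :=
      mul_le_mul_of_nonneg_left hγ1 (by linarith)
    norm_num
    linarith
  have hfin : (T : ℝ) * (G/(2*η)) = (T : ℝ) * G / (2*η) := by ring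
  have hb : ∑ t ∈ Finset.Icc 1 T, (L t (θ t) - L t θs) ≤
      (T : ℝ) * (G/(2*η)) + (F 1 - F (T+1)) := hsum2 ▸ hsum
  linarith [hb, hF1, hFT, hfin]
end

section
/- (Theorem 1, learning-accuracy part, with parameter choice ρ = η = √T) Work in a real inner product space H. Fix an integer T ≥ 1 and reals C ≥ 0, G ≥ 0, and set ρ = η = √T. Let L_1, …, L_T : H → ℝ, θ̂_1, …, θ̂_{T+1}, γ̂_1, …, γ̂_{T+1}, λ̂_1, …, λ̂_{T+1} ∈ H and θ⋆ ∈ H satisfy, for every t ∈ {1, …, T}: L_t is convex and differentiable at both θ̂_t and θ̂_{t+1}; the per-step relations (R1) ∇L_t(θ̂_{t+1}) = −λ̂_{t+1} − ρ·(γ̂_{t+1} − γ̂_t) − η·(θ̂_{t+1} − θ̂_t), (R2) λ̂_{t+1} = λ̂_t + ρ·(θ̂_{t+1} − γ̂_{t+1}), (R3) ⟨λ̂_{t+1}, θ⋆ − γ̂_{t+1}⟩ ≤ 0; and ‖∇L_t(θ̂_t)‖² ≤ G. Assume λ̂_1 = 0, ‖γ̂_1 − θ⋆‖² ≤ C, and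 ‖θ̂_1 − θ⋆‖² ≤ C. Then Σ_{t=1}^{T} (L_t(θ̂_t) − L_t(θ⋆)) ≤ ((2·C + G)/2)·√T; in particular the cumulative accuracy regret is O(√T). -/
open scoped InnerProductSpace

lemma grad_convex_ineq {H : Type*} [NormedAddCommGroup H] [InnerProductSpace ℝ H]
    [CompleteSpace H] {f : H → ℝ} {g x : H} (y : H)
    (hf : ConvexOn ℝ Set.univ f) (hg : HasGradientAt f g x) :
    f x + ⟪g, y - x⟫_ℝ ≤ f y := by
  set φ : ℝ → ℝ := fun s => f (AffineMap.lineMap x y s) with hφdef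
  have hφc : ConvexOn ℝ Set.univ φ := by
    have := hf.comp_affineMap (AffineMap.lineMap x y)
    exact this
  have hc : HasDerivAt (fun s : ℝ => (AffineMap.lineMap x y s : H)) (y - x) 0 := by
    have : HasDerivAt (fun s : ℝ => s • (y - x) + x) ((1:ℝ) • (y - x)) 0 :=
      ((hasDerivAt_id (0:ℝ)).smul_const (y - x)).add_const x
    have heq : (fun s : ℝ => s • (y - x) + x) = fun s : ℝ => (AffineMap.lineMap x y s : H) := by
      funext s; simp [AffineMap.lineMap_apply_module]; module
    rw [heq] at this
    simpa using this
  have hφ' : HasDerivAt φ (⟪g, y - x⟫_ℝ) 0 := by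
    have hx0 : (AffineMap.lineMap x y (0:ℝ) : H) = x := by
      simp [AffineMap.lineMap_apply_module]
    have := (hx0 ▸ hg.hasFDerivAt).comp_hasDerivAt 0 hc
    exact this
  have := hφc.le_slope_of_hasDerivAt (Set.mem_univ 0) (Set.mem_univ 1) zero_lt_one hφ'
  have hslope : slope φ 0 1 = f y - f x := by
    simp [slope_def_field, φ, AffineMap.lineMap_apply_module]
  rw [hslope] at this
  linarith

lemma two_inner_expand {H : Type*} [NormedAddCommGroup H] [InnerProductSpace ℝ H]
    (u w : H) : 2 * ⟪u, w⟫_ℝ = ‖u‖^2 + ‖w‖^2 - ‖u - w‖^2 := by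
  have := @norm_sub_sq_real H _ _ u w
  linarith

lemma step_bound {H : Type*} [NormedAddCommGroup H] [InnerProductSpace ℝ H]
    [CompleteSpace H] (ρ G : ℝ) (hρ : 0 < ρ)
    (Lf : H → ℝ) (θ0 θ1 γ0 γ1 l0 l1 g0 θs : H)
    (hconv : ConvexOn ℝ Set.univ Lf)
    (hg0 : HasGradientAt Lf g0 θ0)
    (hg1 : HasGradientAt Lf (-l1 - ρ • (γ1 - γ0) - ρ • (θ1 - θ0)) θ1)
    (hR2 : l1 = l0 + ρ • (θ1 - γ1))
    (hR3 : ⟪l1, θs - γ1⟫_ℝ ≤ 0)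
    (hGb : ‖g0‖^2 ≤ G) :
    2 * ρ * (Lf θ0 - Lf θs) ≤ G + (‖l0‖^2 - ‖l1‖^2)
      + ρ^2 * (‖θ0 - θs‖^2 - ‖θ1 - θs‖^2) + ρ^2 * (‖γ0 - θs‖^2 - ‖γ1 - θs‖^2) := by
  have h1 := grad_convex_ineq θ1 hconv hg0
  have h2 := grad_convex_ineq θs hconv hg1
  -- expand the inner product in h2
  have hv : ⟪-l1 - ρ • (γ1 - γ0) - ρ • (θ1 - θ0), θs - θ1⟫_ℝ
      = -⟪l1, θs - θ1⟫_ℝ - ρ * ⟪γ1 - γ0, θs - θ1⟫_ℝ - ρ * ⟪θ1 - θ0, θs - θ1⟫_ℝ := by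
    simp [inner_sub_left, real_inner_smul_left, inner_neg_left]
  rw [hv] at h2
  -- (b1) Cauchy–Schwarz / AM-GM bound
  have hb1 : 2 * ρ * (-⟪g0, θ1 - θ0⟫_ℝ) ≤ G + ρ^2 * ‖θ1 - θ0‖^2 := by
    have hcs : -⟪g0, θ1 - θ0⟫_ℝ ≤ ‖g0‖ * ‖θ1 - θ0‖ :=
      (neg_le_abs _).trans (abs_real_inner_le_norm _ _)
    nlinarith [sq_nonneg (‖g0‖ - ρ * ‖θ1 - θ0‖), hρ]
  -- norm of the multiplier increment
  have hnl : ‖l1 - l0‖^2 = ρ^2 * ‖θ1 - γ1‖^2 := by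
    have : l1 - l0 = ρ • (θ1 - γ1) := by rw [hR2]; abel
    rw [this, norm_smul, mul_pow, Real.norm_eq_abs, sq_abs]
  -- (b2) multiplier bound: 2 ρ ⟪l1, θs - θ1⟫ ≤ ‖l0‖² - ‖l1‖² - ρ²‖θ1-γ1‖²
  have hb2 : 2 * ρ * ⟪l1, θs - θ1⟫_ℝ ≤ ‖l0‖^2 - ‖l1‖^2 - ρ^2 * ‖θ1 - γ1‖^2 := by
    have hsplitl : ⟪l1, θs - θ1⟫_ℝ = ⟪l1, θs - γ1⟫_ℝ + ⟪l1, γ1 - θ1⟫_ℝ := by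
      rw [← inner_add_right]; congr 1; abel
    have hml : ρ * ⟪l1, γ1 - θ1⟫_ℝ = ⟪l1, l0 - l1⟫_ℝ := by
      rw [← real_inner_smul_right]; congr 1; rw [hR2]; module
    have hsub : ⟪l1, l0 - l1⟫_ℝ = ⟪l1, l0⟫_ℝ - ‖l1‖^2 := by
      rw [inner_sub_right, real_inner_self_eq_norm_sq]
    have hexp := two_inner_expand l1 l0
    have hρ2 : 0 < 2 * ρ := by linarith
    nlinarith [mul_le_mul_of_nonneg_left hR3 (le_of_lt hρ2)]
  -- (b3) θ–term, exact expansion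
  have hb3 : 2 * ⟪θ1 - θ0, θs - θ1⟫_ℝ = ‖θ0 - θs‖^2 - ‖θ1 - θs‖^2 - ‖θ1 - θ0‖^2 := by
    have h := two_inner_expand (θ1 - θ0) (θ1 - θs)
    have h1' : θ1 - θ0 - (θ1 - θs) = -(θ0 - θs) := by abel
    rw [h1', norm_neg] at h
    have h2' : ⟪θ1 - θ0, θs - θ1⟫_ℝ = -⟪θ1 - θ0, θ1 - θs⟫_ℝ := by
      rw [← inner_neg_right]; congr 1; abel
    rw [h2']; linarith
  -- (b4) γ–term bound
  have hb4 : 2 * ⟪γ1 - γ0, θs - θ1⟫_ℝ ≤ ‖γ0 - θs‖^2 - ‖γ1 - θs‖^2 + ‖θ1 - γ1‖^2 := by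
    have hsplit : ⟪γ1 - γ0, θs - θ1⟫_ℝ = ⟪γ1 - γ0, θs - γ1⟫_ℝ + ⟪γ1 - γ0, γ1 - θ1⟫_ℝ := by
      rw [← inner_add_right]; congr 1; abel
    have hA : 2 * ⟪γ1 - γ0, θs - γ1⟫_ℝ = ‖γ0 - θs‖^2 - ‖γ1 - θs‖^2 - ‖γ1 - γ0‖^2 := by
      have h := two_inner_expand (γ1 - γ0) (γ1 - θs)
      have h1' : γ1 - γ0 - (γ1 - θs) = -(γ0 - θs) := by abel
      rw [h1', norm_neg] at h
      have h2' : ⟪γ1 - γ0, θs - γ1⟫_ℝ = -⟪γ1 - γ0, γ1 - θs⟫_ℝ := by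
        rw [← inner_neg_right]; congr 1; abel
      rw [h2']; linarith
    have hB : ⟪γ1 - γ0, γ1 - θ1⟫_ℝ ≤ (‖γ1 - γ0‖^2 + ‖θ1 - γ1‖^2) / 2 := by
      have hcs : ⟪γ1 - γ0, γ1 - θ1⟫_ℝ ≤ ‖γ1 - γ0‖ * ‖γ1 - θ1‖ :=
        real_inner_le_norm _ _
      have hn : ‖γ1 - θ1‖ = ‖θ1 - γ1‖ := by rw [← norm_neg]; congr 1; abel
      rw [hn] at hcs
      nlinarith [sq_nonneg (‖γ1 - γ0‖ - ‖θ1 - γ1‖)]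
    linarith
  -- combine
  have hmain : Lf θ0 - Lf θs ≤ -⟪g0, θ1 - θ0⟫_ℝ + ⟪l1, θs - θ1⟫_ℝ
      + ρ * ⟪γ1 - γ0, θs - θ1⟫_ℝ + ρ * ⟪θ1 - θ0, θs - θ1⟫_ℝ := by linarith
  have hmul := mul_le_mul_of_nonneg_left hmain (by linarith : (0:ℝ) ≤ 2 * ρ)
  have hb4' := mul_le_mul_of_nonneg_left hb4 (by positivity : (0:ℝ) ≤ ρ^2)
  have hb3' : ρ^2 * (2 * ⟪θ1 - θ0, θs - θ1⟫_ℝ)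
      = ρ^2 * (‖θ0 - θs‖^2 - ‖θ1 - θs‖^2 - ‖θ1 - θ0‖^2) := by rw [hb3]
  linarith [hb1, hb2, hb3', hb4', hmul]

lemma telescope_Icc (f : ℕ → ℝ) (T : ℕ) :
    ∑ t ∈ Finset.Icc 1 T, (f t - f (t + 1)) = f 1 - f (T + 1) := by
  induction T with
  | zero => simp
  | succ n ih =>
    rw [Finset.sum_Icc_succ_top (by omega : 1 ≤ n + 1), ih]
    ring

/-- Theorem 1 of the paper, learning-accuracy part, with parameter choice ρ = η = √T. -/
theorem domkl_thm1_accuracy_sqrtT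
    {H : Type*} [NormedAddCommGroup H] [InnerProductSpace ℝ H] [CompleteSpace H]
    (T : ℕ) (hT : 1 ≤ T)
    (C G : ℝ) (hC : 0 ≤ C) (hG : 0 ≤ G)
    (ρ η : ℝ) (hρ : ρ = Real.sqrt T) (hη : η = Real.sqrt T)
    (L : ℕ → H → ℝ) (θ γ' lam g : ℕ → H) (θs : H)
    (hconv : ∀ t ∈ Finset.Icc 1 T, ConvexOn ℝ Set.univ (L t))
    (hgradt : ∀ t ∈ Finset.Icc 1 T, HasGradientAt (L t) (g t) (θ t))
    (hgradt1 : ∀ t ∈ Finset.Icc 1 T,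
      HasGradientAt (L t)
        (-(lam (t + 1)) - ρ • (γ' (t + 1) - γ' t) - η • (θ (t + 1) - θ t)) (θ (t + 1)))
    (hR2 : ∀ t ∈ Finset.Icc 1 T, lam (t + 1) = lam t + ρ • (θ (t + 1) - γ' (t + 1)))
    (hR3 : ∀ t ∈ Finset.Icc 1 T, ⟪lam (t + 1), θs - γ' (t + 1)⟫_ℝ ≤ 0)
    (hgbound : ∀ t ∈ Finset.Icc 1 T, ‖g t‖ ^ 2 ≤ G)
    (hlam1 : lam 1 = 0)
    (hγ1 : ‖γ' 1 - θs‖ ^ 2 ≤ C)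
    (hθ1 : ‖θ 1 - θs‖ ^ 2 ≤ C) :
    ∑ t ∈ Finset.Icc 1 T, (L t (θ t) - L t θs) ≤
      ((2 * C + G) / 2) * Real.sqrt T := by
  subst hρ hη
  set ρ : ℝ := Real.sqrt T with hρdef
  have hTpos : (0:ℝ) < T := by exact_mod_cast Nat.lt_of_lt_of_le Nat.zero_lt_one hT
  have hρpos : 0 < ρ := Real.sqrt_pos.mpr hTpos
  have hρsq : ρ ^ 2 = T := Real.sq_sqrt hTpos.le
  set Φ : ℕ → ℝ := fun t =>
    ‖lam t‖ ^ 2 + ρ ^ 2 * ‖θ t - θs‖ ^ 2 + ρ ^ 2 * ‖γ' t - θs‖ ^ 2 with hΦ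
  have hstep : ∀ t ∈ Finset.Icc 1 T,
      2 * ρ * (L t (θ t) - L t θs) ≤ G + (Φ t - Φ (t + 1)) := by
    intro t ht
    have h := step_bound ρ G hρpos (L t) (θ t) (θ (t + 1)) (γ' t) (γ' (t + 1))
      (lam t) (lam (t + 1)) (g t) θs (hconv t ht) (hgradt t ht) (hgradt1 t ht)
      (hR2 t ht) (hR3 t ht) (hgbound t ht)
    simp only [hΦ]
    linarith
  have hsum := Finset.sum_le_sum hstep
  rw [← Finset.mul_sum] at hsum
  rw [Finset.sum_add_distrib, Finset.sum_const, Nat.card_Icc, telescope_Icc Φ T] at hsum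
  have hcard : (T + 1 - 1) • G = (T : ℝ) * G := by
    simp [nsmul_eq_mul]
  rw [hcard] at hsum
  have hΦ1 : Φ 1 ≤ 2 * ρ ^ 2 * C := by
    have h1 : ‖lam 1‖ ^ 2 = 0 := by rw [hlam1]; simp
    have h2 := mul_le_mul_of_nonneg_left hθ1 (by positivity : (0:ℝ) ≤ ρ ^ 2)
    have h3 := mul_le_mul_of_nonneg_left hγ1 (by positivity : (0:ℝ) ≤ ρ ^ 2)
    simp only [hΦ]
    linarith
  have hΦT : 0 ≤ Φ (T + 1) := by simp only [hΦ]; positivity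
  have hfinal : 2 * ρ * (∑ t ∈ Finset.Icc 1 T, (L t (θ t) - L t θs))
      ≤ ρ ^ 2 * G + 2 * ρ ^ 2 * C := by
    have hTG : (T : ℝ) * G = ρ ^ 2 * G := by rw [hρsq]
    linarith
  nlinarith [hfinal, hρpos]
end

section
/- (Theorem 1, consensus-violation part, non-asymptotic form) Work in a real inner product space H. Fix an integer T ≥ 1 and reals ρ > 0, η > 0, C ≥ 0, B ≥ 0. Let L_1, …, L_T : H → ℝ, θ̂_1, …, θ̂_{T+1}, γ̂_1, …, γ̂_{T+1}, λ̂_1, …, λ̂_{T+1} ∈ H and θ⋆ ∈ H satisfy, for every t ∈ {1, …, T}: L_t is convex and differentiable at θ̂_{t+1}; the per-step relations (R1) ∇L_t(θ̂_{t+1}) = −λ̂_{t+1} − ρ·(γ̂_{t+1} − γ̂_t) − η·(θ̂_{t+1} − θ̂_t), (R2) λ̂_{t+1} = λ̂_t + ρ·(θ̂_{t+1} − γ̂_{t+1}), (R3) ⟨λ̂_{t+1}, θ⋆ − γ̂_{t+1}⟩ ≤ 0; and the lower bound L_t(θ̂_{t+1}) − L_t(θ⋆) ≥ −B. Assume λ̂_1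 = 0, ‖γ̂_1 − θ⋆‖² ≤ C, and ‖θ̂_1 − θ⋆‖² ≤ C. Then Σ_{t=1}^{T} ‖θ̂_{t+1} − γ̂_t‖² ≤ 2·B·T/ρ + C + (η/ρ)·C. -/
open scoped InnerProductSpace

lemma subgrad_aux {H : Type*} [NormedAddCommGroup H] [InnerProductSpace ℝ H] [CompleteSpace H]
    {f : H → ℝ} {g x : H} (hf : ConvexOn ℝ Set.univ f) (hg : HasGradientAt f g x) (y : H) :
    ⟪g, y - x⟫_ℝ ≤ f y - f x := by
  have hA : ConvexOn ℝ Set.univ (f ∘ (AffineMap.lineMap x y : ℝ →ᵃ[ℝ] H)) := by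
    have := hf.comp_affineMap (AffineMap.lineMap x y : ℝ →ᵃ[ℝ] H)
    simpa using this
  have hline : HasDerivAt (AffineMap.lineMap x y : ℝ → H) (y - x) 0 :=
    AffineMap.hasDerivAt_lineMap
  have hF : HasFDerivAt f (InnerProductSpace.toDual ℝ H g) x :=
    (hasGradientAt_iff_hasFDerivAt).1 hg
  have hd : HasDerivAt (f ∘ (AffineMap.lineMap x y : ℝ → H)) ⟪g, y - x⟫_ℝ 0 := by
    have h0 : (AffineMap.lineMap x y : ℝ → H) 0 = x := by simp
    rw [← h0] at hF
    have := hF.comp_hasDerivAt 0 hline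
    simpa [InnerProductSpace.toDual_apply_apply] using this
  have := hA.le_slope_of_hasDerivAt (Set.mem_univ 0) (Set.mem_univ 1) zero_lt_one hd
  simpa [slope_def_field, Function.comp] using this

lemma inner_id4 {H : Type*} [NormedAddCommGroup H] [InnerProductSpace ℝ H]
    (X Y Z : H) : 2*⟪Z - Y, X⟫_ℝ = ‖Z‖^2 - ‖Y‖^2 + ‖X - Y‖^2 - ‖X - Z‖^2 := by
  rw [norm_sub_sq_real, norm_sub_sq_real, inner_sub_left, real_inner_comm Z X,
    real_inner_comm Y X]
  ring

lemma inner_id5 {H : Type*} [NormedAddCommGroup H] [InnerProductSpace ℝ H]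
    (X Y : H) : 2*⟪X - Y, X⟫_ℝ = ‖X‖^2 - ‖Y‖^2 + ‖X - Y‖^2 := by
  rw [norm_sub_sq_real, inner_sub_left, real_inner_comm Y X, real_inner_self_eq_norm_sq]
  ring

lemma domkl_step_aux {H : Type*} [NormedAddCommGroup H] [InnerProductSpace ℝ H]
    (ρ η B : ℝ) (hρ : 0 < ρ) (hη : 0 < η)
    (a b c p s l l' : H)
    (hR2 : l' = l + ρ • (a - c))
    (hR3 : ⟪l', s - c⟫_ℝ ≤ 0)
    (hgrad : ⟪-l' - ρ • (c - b) - η • (a - p), s - a⟫_ℝ ≤ B) :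
    ρ/2 * ‖a - b‖^2 ≤ B
      + (1/(2*ρ)*‖l‖^2 + ρ/2*‖b - s‖^2 + η/2*‖p - s‖^2)
      - (1/(2*ρ)*‖l'‖^2 + ρ/2*‖c - s‖^2 + η/2*‖a - s‖^2) := by
  set u := ⟪l, a - c⟫_ℝ with hu
  set v := ⟪l', c - s⟫_ℝ with hv
  set w := ⟪c - b, a - s⟫_ℝ with hw
  set z := ⟪a - p, a - s⟫_ℝ with hz
  -- f2
  have f2 : 0 ≤ v := by
    have : s - c = -(c - s) := by abel
    rw [this, inner_neg_right] at hR3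
    linarith
  -- f3
  have f3 : ‖l'‖^2 = ‖l‖^2 + 2*ρ*u + ρ^2*‖a - c‖^2 := by
    rw [hR2, norm_add_sq_real, real_inner_smul_right, norm_smul, Real.norm_eq_abs,
      mul_pow, sq_abs]
    ring
  -- f4
  have f4 : 2*w = ‖c - s‖^2 - ‖b - s‖^2 + ‖a - b‖^2 - ‖a - c‖^2 := by
    have h1 : a - b = (a - s) - (b - s) := by abel
    have h2 : a - c = (a - s) - (c - s) := by abel
    have h3 : c - b = (c - s) - (b - s) := by abel
    have := inner_id4 (a - s) (b - s) (c - s)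
    rw [hw, h3, ← h1, ← h2] at *
    linarith [this]
  -- f5
  have f5 : 2*z = ‖a - s‖^2 - ‖p - s‖^2 + ‖a - p‖^2 := by
    have h1 : a - p = (a - s) - (p - s) := by abel
    have := inner_id5 (a - s) (p - s)
    rw [hz, h1]
    rw [← h1] at this ⊢
    linarith [this]
  -- f1
  have f1 : u + ρ*‖a - c‖^2 + v + ρ*w + η*z ≤ B := by
    have hg : -l' - ρ • (c - b) - η • (a - p) = -(l' + ρ • (c - b) + η • (a - p)) := by abel
    have hsa : s - a = -(a - s) := by abel
    rw [hg, hsa, inner_neg_neg, inner_add_left, inner_add_left, real_inner_smul_left,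
      real_inner_smul_left] at hgrad
    have hl' : ⟪l', a - s⟫_ℝ = u + ρ*‖a - c‖^2 + v := by
      have hac : a - s = (a - c) + (c - s) := by abel
      rw [hac, inner_add_right, hR2, inner_add_left, real_inner_smul_left,
        real_inner_self_eq_norm_sq, hu, hv, hR2]
    rw [hl'] at hgrad
    linarith
  -- combine
  have hQ : 0 ≤ η/2 * ‖a - p‖^2 := by positivity
  have hD : 0 ≤ ρ * ‖a - c‖^2 := by positivity
  have hlu : 1/(2*ρ)*‖l‖^2 - 1/(2*ρ)*‖l'‖^2 = -u - ρ/2*‖a - c‖^2 := by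
    rw [f3]; field_simp; ring
  have hw' : ρ*w = ρ/2*(‖c - s‖^2 - ‖b - s‖^2 + ‖a - b‖^2 - ‖a - c‖^2) := by
    linear_combination (ρ/2) * f4
  have hz' : η*z = η/2*(‖a - s‖^2 - ‖p - s‖^2 + ‖a - p‖^2) := by
    linear_combination (η/2) * f5
  nlinarith [f1, f2, hQ, hlu, hw', hz']

/-- Theorem 1 of the paper, consensus-violation part, non-asymptotic form. -/
theorem domkl_thm1_consensus
    {H : Type*} [NormedAddCommGroup H] [InnerProductSpace ℝ H] [CompleteSpace H]
    (T : ℕ) (hT : 1 ≤ T)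
    (ρ η C B : ℝ) (hρ : 0 < ρ) (hη : 0 < η) (hC : 0 ≤ C) (hB : 0 ≤ B)
    (L : ℕ → H → ℝ) (θ γ' lam : ℕ → H) (θs : H)
    (hconv : ∀ t ∈ Finset.Icc 1 T, ConvexOn ℝ Set.univ (L t))
    (hgradt1 : ∀ t ∈ Finset.Icc 1 T,
      HasGradientAt (L t)
        (-(lam (t + 1)) - ρ • (γ' (t + 1) - γ' t) - η • (θ (t + 1) - θ t)) (θ (t + 1)))
    (hR2 : ∀ t ∈ Finset.Icc 1 T, lam (t + 1) = lam t + ρ • (θ (t + 1) - γ' (t + 1)))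
    (hR3 : ∀ t ∈ Finset.Icc 1 T, ⟪lam (t + 1), θs - γ' (t + 1)⟫_ℝ ≤ 0)
    (hBlow : ∀ t ∈ Finset.Icc 1 T, L t (θ (t + 1)) - L t θs ≥ -B)
    (hlam1 : lam 1 = 0)
    (hγ1 : ‖γ' 1 - θs‖ ^ 2 ≤ C)
    (hθ1 : ‖θ 1 - θs‖ ^ 2 ≤ C) :
    ∑ t ∈ Finset.Icc 1 T, ‖θ (t + 1) - γ' t‖ ^ 2 ≤
      2 * B * (T : ℝ) / ρ + C + (η / ρ) * C := by
  set Φ : ℕ → ℝ := fun t =>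
    1/(2*ρ)*‖lam t‖^2 + ρ/2*‖γ' t - θs‖^2 + η/2*‖θ t - θs‖^2 with hΦ
  have key : ∀ t ∈ Finset.Icc 1 T,
      ρ/2 * ‖θ (t + 1) - γ' t‖^2 ≤ B + (Φ t - Φ (t + 1)) := by
    intro t ht
    have hgrad : ⟪-(lam (t+1)) - ρ • (γ' (t+1) - γ' t) - η • (θ (t+1) - θ t),
        θs - θ (t+1)⟫_ℝ ≤ B := by
      have h1 := subgrad_aux (hconv t ht) (hgradt1 t ht) θs
      have h2 := hBlow t ht
      linarith
    have := domkl_step_aux ρ η B hρ hη (θ (t+1)) (γ' t) (γ' (t+1)) (θ t) θs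
      (lam t) (lam (t+1)) (hR2 t ht) (hR3 t ht) hgrad
    simp only [hΦ]
    linarith
  have tel : ∀ N : ℕ, ∑ t ∈ Finset.Icc 1 N, (Φ t - Φ (t + 1)) = Φ 1 - Φ (N + 1) := by
    intro N
    induction N with
    | zero => simp
    | succ n ih =>
      rw [Finset.sum_Icc_succ_top (by omega), ih]
      ring
  have hsum : ρ/2 * ∑ t ∈ Finset.Icc 1 T, ‖θ (t + 1) - γ' t‖^2
      ≤ B * T + Φ 1 - Φ (T + 1) := by
    rw [Finset.mul_sum]
    calc ∑ t ∈ Finset.Icc 1 T, ρ/2 * ‖θ (t + 1) - γ' t‖^2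
        ≤ ∑ t ∈ Finset.Icc 1 T, (B + (Φ t - Φ (t + 1))) := Finset.sum_le_sum key
      _ = B * T + Φ 1 - Φ (T + 1) := by
          rw [Finset.sum_add_distrib, tel T, Finset.sum_const, Nat.card_Icc]
          simp [mul_comm]
          ring
  have hΦT : 0 ≤ Φ (T + 1) := by simp only [hΦ]; positivity
  have hΦ1 : Φ 1 ≤ ρ/2*C + η/2*C := by
    have h1 : ρ/2*‖γ' 1 - θs‖^2 ≤ ρ/2*C := by nlinarith
    have h2 : η/2*‖θ 1 - θs‖^2 ≤ η/2*C := by nlinarith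
    simp only [hΦ, hlam1, norm_zero]
    nlinarith [h1, h2]
  clear_value Φ
  have hfin : ρ/2 * ∑ t ∈ Finset.Icc 1 T, ‖θ (t + 1) - γ' t‖^2
      ≤ B * T + ρ/2*C + η/2*C := by linarith
  have hdiv : ∑ t ∈ Finset.Icc 1 T, ‖θ (t + 1) - γ' t‖^2
      ≤ (2*(B*T) + ρ*C + η*C)/ρ := by
    rw [le_div_iff₀ hρ]
    nlinarith [hfin]
  have heq : (2*(B*T) + ρ*C + η*C)/ρ = 2 * B * (T:ℝ) / ρ + C + (η/ρ)*C := by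
    field_simp
  calc ∑ t ∈ Finset.Icc 1 T, ‖θ (t + 1) - γ' t‖^2 ≤ (2*(B*T) + ρ*C + η*C)/ρ := hdiv
    _ = _ := heq
end

section
/- (Theorem 1, consensus-violation part, with parameter choice ρ = η = √T) Work in a real inner product space H. Fix an integer T ≥ 1 and reals C ≥ 0, B ≥ 0, and set ρ = η = √T. Let L_1, …, L_T : H → ℝ, θ̂_1, …, θ̂_{T+1}, γ̂_1, …, γ̂_{T+1}, λ̂_1, …, λ̂_{T+1} ∈ H and θ⋆ ∈ H satisfy, for every t ∈ {1, …, T}: L_t is convex and differentiable at θ̂_{t+1}; the per-step relations (R1) ∇L_t(θ̂_{t+1}) = −λ̂_{t+1} − ρ·(γ̂_{t+1} − γ̂_t) − η·(θ̂_{t+1} − θ̂_t), (R2) λ̂_{t+1} = λ̂_t + ρ·(θ̂_{t+1} − γ̂_{t+1}), (R3) ⟨λ̂_{t+1}, θ⋆ − γ̂_{t+1}⟩ ≤ 0; and L_t(θ̂_{t+1}) − L_t(θ⋆) ≥ −B. Assume λ̂_1 = 0, ‖γ̂_1 − θ⋆‖² ≤ C, and ‖θ̂_1 − θ⋆‖²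 ≤ C. Then Σ_{t=1}^{T} ‖θ̂_{t+1} − γ̂_t‖² ≤ 2·B·√T + 2·C; in particular the cumulative consensus violation is O(√T). -/
open scoped InnerProductSpace

section Helpers

variable {H : Type*} [NormedAddCommGroup H] [InnerProductSpace ℝ H]

private lemma domkl_convex_grad_ineq [CompleteSpace H] {f : H → ℝ} {g x : H}
    (hf : ConvexOn ℝ Set.univ f) (hg : HasGradientAt f g x) (y : H) :
    f x + ⟪g, y - x⟫_ℝ ≤ f y := by
  set c : ℝ →ᵃ[ℝ] H := AffineMap.lineMap x y with hc
  have hline : HasDerivAt (fun t : ℝ => c t) (y - x) 0 := by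
    simp only [hc, AffineMap.coe_lineMap]
    simpa using ((hasDerivAt_id (0:ℝ)).smul_const (y - x)).add_const x
  have hfd : HasFDerivAt f ((InnerProductSpace.toDual ℝ H) g : H →L[ℝ] ℝ) x :=
    hg.hasFDerivAt
  have hc0 : c 0 = x := by simp [hc]
  have hd : HasDerivAt (f ∘ c) ⟪g, y - x⟫_ℝ 0 := by
    have := (hc0 ▸ hfd).comp_hasDerivAt 0 hline
    simpa [InnerProductSpace.toDual_apply_apply] using this
  have hconv : ConvexOn ℝ Set.univ (f ∘ c) := by
    simpa using hf.comp_affineMap c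
  have hslope := hconv.le_slope_of_hasDerivAt (Set.mem_univ 0) (Set.mem_univ 1)
    one_pos hd
  have h1 : c 1 = y := by simp [hc]
  rw [slope_def_field] at hslope
  simp only [Function.comp, hc0, h1] at hslope
  simp at hslope
  linarith

private lemma domkl_step_identity (r : ℝ) (hr : 0 < r) (θt θt1 γt γt1 lt θs : H) :
    ⟪(lt + r • (θt1 - γt1)) + r • (γt1 - γt) + r • (θt1 - θt), θt1 - θs⟫_ℝ =
      (1/(2*r)) * (‖lt + r • (θt1 - γt1)‖^2 - ‖lt‖^2)
      + r/2 * (‖θt1 - γt‖^2 + ‖γt1 - θs‖^2 - ‖γt - θs‖^2)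
      + r/2 * (‖θt1 - θt‖^2 + ‖θt1 - θs‖^2 - ‖θt - θs‖^2)
      + ⟪lt + r • (θt1 - γt1), γt1 - θs⟫_ℝ := by
  simp only [← real_inner_self_eq_norm_sq]
  simp only [inner_add_left, inner_add_right, inner_sub_left, inner_sub_right,
    real_inner_smul_left, real_inner_smul_right]
  field_simp
  simp only [real_inner_comm θt1 lt, real_inner_comm γt1 lt, real_inner_comm γt1 θt1,
    real_inner_comm θt1 γt, real_inner_comm θs γt1, real_inner_comm θs γt,
    real_inner_comm θs θt1, real_inner_comm θs θt, real_inner_comm θt1 θt]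
  ring

private lemma domkl_tele (f : ℕ → ℝ) (T : ℕ) (hT : 1 ≤ T) :
    ∑ t ∈ Finset.Icc 1 T, (f t - f (t+1)) = f 1 - f (T+1) := by
  induction T with
  | zero => omega
  | succ n ih =>
    rcases Nat.eq_or_lt_of_le hT with h | h
    · simp [← h]
    · have hn : 1 ≤ n := by omega
      rw [Finset.sum_Icc_succ_top (by omega : 1 ≤ n + 1), ih hn]
      ring

end Helpers

/-- Theorem 1 of the paper, consensus-violation part, with parameter choice ρ = η = √T. -/
theorem domkl_thm1_consensus_sqrtT
    {H : Type*} [NormedAddCommGroup H] [InnerProductSpace ℝ H] [CompleteSpace H]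
    (T : ℕ) (hT : 1 ≤ T)
    (C B : ℝ) (hC : 0 ≤ C) (hB : 0 ≤ B)
    (ρ η : ℝ) (hρ : ρ = Real.sqrt T) (hη : η = Real.sqrt T)
    (L : ℕ → H → ℝ) (θ γ' lam : ℕ → H) (θs : H)
    (hconv : ∀ t ∈ Finset.Icc 1 T, ConvexOn ℝ Set.univ (L t))
    (hgradt1 : ∀ t ∈ Finset.Icc 1 T,
      HasGradientAt (L t)
        (-(lam (t + 1)) - ρ • (γ' (t + 1) - γ' t) - η • (θ (t + 1) - θ t)) (θ (t + 1)))
    (hR2 : ∀ t ∈ Finset.Icc 1 T, lam (t + 1) = lam t + ρ • (θ (t + 1) - γ' (t + 1)))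
    (hR3 : ∀ t ∈ Finset.Icc 1 T, ⟪lam (t + 1), θs - γ' (t + 1)⟫_ℝ ≤ 0)
    (hBlow : ∀ t ∈ Finset.Icc 1 T, L t (θ (t + 1)) - L t θs ≥ -B)
    (hlam1 : lam 1 = 0)
    (hγ1 : ‖γ' 1 - θs‖ ^ 2 ≤ C)
    (hθ1 : ‖θ 1 - θs‖ ^ 2 ≤ C) :
    ∑ t ∈ Finset.Icc 1 T, ‖θ (t + 1) - γ' t‖ ^ 2 ≤
      2 * B * Real.sqrt T + 2 * C := by
  set r : ℝ := Real.sqrt T with hrdef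
  have hr : 0 < r := Real.sqrt_pos.mpr (by exact_mod_cast Nat.lt_of_lt_of_le Nat.zero_lt_one hT)
  have hrr : r * r = (T : ℝ) := Real.mul_self_sqrt (by positivity)
  subst hρ hη
  -- abbreviations
  set a : ℕ → ℝ := fun t => ‖lam t‖^2 with ha
  set d : ℕ → ℝ := fun t => ‖γ' t - θs‖^2 + ‖θ t - θs‖^2 with hd
  -- per-step inequality
  have key : ∀ t ∈ Finset.Icc 1 T,
      r/2 * ‖θ (t+1) - γ' t‖^2 ≤
        B + (1/(2*r)) * (a t - a (t+1)) + r/2 * (d t - d (t+1)) := by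
    intro t ht
    have hcv := domkl_convex_grad_ineq (hconv t ht) (hgradt1 t ht) θs
    have hBl := hBlow t ht
    have hneg : (-(lam (t + 1)) - r • (γ' (t + 1) - γ' t) - r • (θ (t + 1) - θ t))
        = -((lam (t + 1)) + r • (γ' (t + 1) - γ' t) + r • (θ (t + 1) - θ t)) := by
      abel
    have hS : ⟪lam (t + 1) + r • (γ' (t + 1) - γ' t) + r • (θ (t + 1) - θ t),
        θ (t+1) - θs⟫_ℝ ≤ B := by
      rw [hneg] at hcv
      rw [show θs - θ (t+1) = -(θ (t+1) - θs) by abel, inner_neg_neg] at hcv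
      linarith
    rw [hR2 t ht] at hS
    rw [domkl_step_identity r hr (θ t) (θ (t+1)) (γ' t) (γ' (t+1)) (lam t) θs] at hS
    have hR3' : 0 ≤ ⟪lam t + r • (θ (t + 1) - γ' (t + 1)), γ' (t+1) - θs⟫_ℝ := by
      have := hR3 t ht
      rw [hR2 t ht] at this
      rw [show θs - γ' (t+1) = -(γ' (t+1) - θs) by abel, inner_neg_right] at this
      linarith
    have hnn : (0:ℝ) ≤ ‖θ (t+1) - θ t‖^2 := by positivity
    have halam : a (t+1) = ‖lam t + r • (θ (t + 1) - γ' (t + 1))‖^2 := by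
      rw [ha]; simp only; rw [hR2 t ht]
    simp only [ha, hd] at *
    rw [halam]
    nlinarith [hS, hR3', hnn]
  have hsum := Finset.sum_le_sum key
  rw [← Finset.mul_sum] at hsum
  have e1 : ∑ t ∈ Finset.Icc 1 T,
      (B + (1/(2*r)) * (a t - a (t+1)) + r/2 * (d t - d (t+1)))
      = (T : ℝ) * B + (1/(2*r)) * (a 1 - a (T+1)) + r/2 * (d 1 - d (T+1)) := by
    rw [Finset.sum_add_distrib, Finset.sum_add_distrib, ← Finset.mul_sum, ← Finset.mul_sum,
      domkl_tele a T hT, domkl_tele d T hT, Finset.sum_const, Nat.card_Icc]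
    simp [mul_comm]
  rw [e1] at hsum
  have ha1 : a 1 = 0 := by simp [ha, hlam1]
  have haT : 0 ≤ a (T+1) := by positivity
  have hd1 : d 1 ≤ 2 * C := by simp only [hd]; linarith
  have hdT : 0 ≤ d (T+1) := by positivity
  have hfin : r/2 * ∑ t ∈ Finset.Icc 1 T, ‖θ (t+1) - γ' t‖^2 ≤ r * (r * B + C) := by
    have h2r : 0 < 1/(2*r) := by positivity
    nlinarith [hsum]
  have h2 : ∑ t ∈ Finset.Icc 1 T, ‖θ (t+1) - γ' t‖^2 ≤ 2 * (r * B + C) := by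
    have h3 := mul_le_mul_of_nonneg_left hfin (le_of_lt (by positivity : (0:ℝ) < 2/r))
    calc ∑ t ∈ Finset.Icc 1 T, ‖θ (t+1) - γ' t‖^2
        = (2/r) * (r/2 * ∑ t ∈ Finset.Icc 1 T, ‖θ (t+1) - γ' t‖^2) := by
          field_simp
      _ ≤ (2/r) * (r * (r * B + C)) := h3
      _ = 2 * (r * B + C) := by field_simp
  calc ∑ t ∈ Finset.Icc 1 T, ‖θ (t+1) - γ' t‖^2 ≤ 2 * (r * B + C) := h2
    _ = 2 * B * r + 2 * C := by ring
end

section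
/- (Hedge/exponential-weights regret bound) Fix integers T ≥ 1 and P ≥ 1 and reals η > 0 and B ≥ 0. Let ℓ(t,p) ∈ ℝ for t = 1,…,T and p = 1,…,P satisfy 0 ≤ ℓ(t,p) ≤ B. Define the Hedge weights w(t,p) = exp(−(1/η)·Σ_{τ=1}^{t−1} ℓ(τ,p)) (so w(1,p) = 1) and q(t,p) = w(t,p) / Σ_{p'=1}^{P} w(t,p'). Then Σ_{t=1}^{T} Σ_{p=1}^{P} q(t,p)·ℓ(t,p) − min_{1≤p≤P} Σ_{t=1}^{T} ℓ(t,p) ≤ T·B²/(8η) + η·log P. -/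
open Real in
lemma hedge_core (p : ℝ) (hp0 : 0 ≤ p) (hp1 : p ≤ 1) (h : ℝ) :
    Real.log (1 - p + p * Real.exp h) ≤ p * h + h ^ 2 / 8 := by
  set D : ℝ → ℝ := fun x => 1 - p + p * Real.exp x with hDdef
  have hD : ∀ x, 0 < D x := by
    intro x
    rcases eq_or_lt_of_le hp1 with rfl | hp1'
    · simp [hDdef]; positivity
    · have := Real.exp_pos x
      have : 0 ≤ p * Real.exp x := by positivity
      simp only [hDdef]; linarith
  have hDd : ∀ x, HasDerivAt D (p * Real.exp x) x := by
    intro x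
    simpa [hDdef] using ((Real.hasDerivAt_exp x).const_mul p).const_add (1 - p)
  have haled : ∀ x, p * Real.exp x ≤ D x := by
    intro x; simp only [hDdef]; linarith
  have hann : ∀ x, 0 ≤ p * Real.exp x := fun x => by positivity
  -- φ is the derivative of f
  set φ : ℝ → ℝ := fun x => p + x / 4 - p * Real.exp x / D x with hφdef
  have hφd : ∀ x, HasDerivAt φ
      (1 / 4 - (p * Real.exp x * D x - p * Real.exp x * (p * Real.exp x)) / (D x) ^ 2) x := by
    intro x
    have h1 : HasDerivAt (fun x : ℝ => p + x / 4) (1 / 4) x := by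
      simpa using ((hasDerivAt_id x).div_const 4).const_add p
    have h2 : HasDerivAt (fun x => p * Real.exp x / D x)
        ((p * Real.exp x * D x - p * Real.exp x * (p * Real.exp x)) / (D x) ^ 2) x :=
      ((Real.hasDerivAt_exp x).const_mul p).div (hDd x) (hD x).ne'
    exact h1.sub h2
  have hφmono : Monotone φ := by
    apply monotone_of_deriv_nonneg
    · intro x; exact (hφd x).differentiableAt
    · intro x
      rw [(hφd x).deriv]
      have hd := hD x
      have h1 := haled x
      have h2 := hann x
      rw [sub_nonneg, div_le_iff₀ (by positivity)]
      generalize p * Real.exp x = a at h1 h2 ⊢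
      generalize D x = d at hd h1 ⊢
      nlinarith [sq_nonneg (d - 2 * a)]
  have hφ0 : φ 0 = 0 := by
    simp only [hφdef, hDdef, Real.exp_zero, mul_one]
    have : 1 - p + p = 1 := by ring
    rw [this]; ring
  set f : ℝ → ℝ := fun x => p * x + x ^ 2 / 8 - Real.log (D x) with hfdef
  have hfd : ∀ x, HasDerivAt f (φ x) x := by
    intro x
    have h1 : HasDerivAt (fun x : ℝ => p * x + x ^ 2 / 8) (p + x / 4) x := by
      have := ((hasDerivAt_id x).const_mul p).add ((hasDerivAt_pow 2 x).div_const 8)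
      exact this.congr_deriv (by norm_num; ring)
    have h2 : HasDerivAt (fun x => Real.log (D x)) (p * Real.exp x / D x) x :=
      (hDd x).log (hD x).ne'
    exact h1.sub h2
  have hf0 : f 0 = 0 := by
    simp only [hfdef, hDdef, Real.exp_zero, mul_one]
    have : 1 - p + p = 1 := by ring
    rw [this]; simp
  have hfnn : ∀ x, 0 ≤ f x := by
    intro x
    rcases le_total 0 x with hx | hx
    · have hm : MonotoneOn f (Set.Ici 0) := by
        apply monotoneOn_of_deriv_nonneg (convex_Ici 0)
        · exact fun y _ => (hfd y).continuousAt.continuousWithinAt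
        · exact fun y _ => ((hfd y).differentiableAt).differentiableWithinAt
        · intro y hy
          rw [(hfd y).deriv, ← hφ0]
          exact hφmono (le_of_lt (by simpa using hy))
      have := hm (Set.self_mem_Ici) (by exact hx) hx
      linarith [hf0 ▸ this]
    · have hm : AntitoneOn f (Set.Iic 0) := by
        apply antitoneOn_of_deriv_nonpos (convex_Iic 0)
        · exact fun y _ => (hfd y).continuousAt.continuousWithinAt
        · exact fun y _ => ((hfd y).differentiableAt).differentiableWithinAt
        · intro y hy
          rw [(hfd y).deriv, ← hφ0]
          exact hφmono (le_of_lt (by simpa using hy))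
      have := hm (by exact hx) (Set.self_mem_Iic) hx
      linarith [hf0 ▸ this]
  have := hfnn h
  simp only [hfdef] at this
  linarith

lemma hoeffding_discrete {ι : Type*} (s : Finset ι) (q x : ι → ℝ) (B t : ℝ) (hB : 0 ≤ B)
    (hq0 : ∀ i ∈ s, 0 ≤ q i) (hq1 : ∑ i ∈ s, q i = 1)
    (hx : ∀ i ∈ s, 0 ≤ x i ∧ x i ≤ B)
    (hcore : ∀ p : ℝ, 0 ≤ p → p ≤ 1 → ∀ h : ℝ,
      Real.log (1 - p + p * Real.exp h) ≤ p * h + h ^ 2 / 8) :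
    Real.log (∑ i ∈ s, q i * Real.exp (t * x i)) ≤
      t * (∑ i ∈ s, q i * x i) + t ^ 2 * B ^ 2 / 8 := by
  have hpos : 0 < ∑ i ∈ s, q i * Real.exp (t * x i) := by
    apply Finset.sum_pos'
    · intro i hi; exact mul_nonneg (hq0 i hi) (Real.exp_pos _).le
    · by_contra hc
      push_neg at hc
      have : ∀ i ∈ s, q i = 0 := by
        intro i hi
        have h1 := hc i hi
        have h2 := mul_nonneg (hq0 i hi) (Real.exp_pos (t * x i)).le
        have h3 : q i * Real.exp (t * x i) = 0 := le_antisymm h1 h2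
        rcases mul_eq_zero.mp h3 with h | h
        · exact h
        · exact absurd h (Real.exp_pos _).ne'
      rw [Finset.sum_eq_zero this] at hq1; norm_num at hq1
  rcases eq_or_lt_of_le hB with rfl | hBpos
  · have hx0 : ∀ i ∈ s, x i = 0 := fun i hi => le_antisymm (hx i hi).2 (hx i hi).1
    have e1 : ∑ i ∈ s, q i * Real.exp (t * x i) = 1 := by
      rw [← hq1]; apply Finset.sum_congr rfl; intro i hi; rw [hx0 i hi]; simp
    have e2 : ∑ i ∈ s, q i * x i = 0 := by
      apply Finset.sum_eq_zero; intro i hi; rw [hx0 i hi]; ring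
    rw [e1, e2]; simp
  · set m := ∑ i ∈ s, q i * x i with hm
    have hm0 : 0 ≤ m := Finset.sum_nonneg fun i hi => mul_nonneg (hq0 i hi) (hx i hi).1
    have hmB : m ≤ B := by
      calc m ≤ ∑ i ∈ s, q i * B :=
              Finset.sum_le_sum fun i hi => mul_le_mul_of_nonneg_left (hx i hi).2 (hq0 i hi)
        _ = B := by rw [← Finset.sum_mul, hq1, one_mul]
    set p := m / B with hp
    have hp0 : 0 ≤ p := div_nonneg hm0 hB
    have hp1 : p ≤ 1 := (div_le_one hBpos).mpr hmB
    have step1 : ∑ i ∈ s, q i * Real.exp (t * x i) ≤ 1 - p + p * Real.exp (t * B) := by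
      have hterm : ∀ i ∈ s, q i * Real.exp (t * x i) ≤
          q i * ((1 - x i / B) + x i / B * Real.exp (t * B)) := by
        intro i hi
        apply mul_le_mul_of_nonneg_left _ (hq0 i hi)
        have hθ1 : 0 ≤ 1 - x i / B := by
          rw [sub_nonneg]; exact (div_le_one hBpos).mpr (hx i hi).2
        have hθ2 : 0 ≤ x i / B := div_nonneg (hx i hi).1 hBpos.le
        have := convexOn_exp.2 (Set.mem_univ (0:ℝ)) (Set.mem_univ (t * B)) hθ1 hθ2 (by ring)
        simp only [smul_eq_mul, mul_zero, zero_add, Real.exp_zero, mul_one] at this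
        calc Real.exp (t * x i) = Real.exp (x i / B * (t * B)) := by
              congr 1; field_simp
          _ ≤ (1 - x i / B) * 1 + x i / B * Real.exp (t * B) := by simpa using this
          _ = (1 - x i / B) + x i / B * Real.exp (t * B) := by ring
      calc ∑ i ∈ s, q i * Real.exp (t * x i)
          ≤ ∑ i ∈ s, q i * ((1 - x i / B) + x i / B * Real.exp (t * B)) :=
            Finset.sum_le_sum hterm
        _ = (∑ i ∈ s, q i) - (∑ i ∈ s, q i * x i) / B
              + (∑ i ∈ s, q i * x i) / B * Real.exp (t * B) := by
            rw [Finset.sum_div, Finset.sum_mul, ← Finset.sum_sub_distrib, ← Finset.sum_add_distrib]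
            apply Finset.sum_congr rfl; intro i hi; field_simp
        _ = 1 - p + p * Real.exp (t * B) := by rw [hq1, ← hm, ← hp]
    calc Real.log (∑ i ∈ s, q i * Real.exp (t * x i))
        ≤ Real.log (1 - p + p * Real.exp (t * B)) := Real.log_le_log hpos step1
      _ ≤ p * (t * B) + (t * B) ^ 2 / 8 := hcore p hp0 hp1 (t * B)
      _ = t * m + t ^ 2 * B ^ 2 / 8 := by rw [hp]; field_simp


/-- Hedge/exponential-weights regret bound. -/
theorem hedge_regret_bound
    (T P : ℕ) (hT : 1 ≤ T) (hP : 1 ≤ P)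
    (η B : ℝ) (hη : 0 < η) (hB : 0 ≤ B)
    (ℓ : ℕ → ℕ → ℝ)
    (hbound : ∀ t ∈ Finset.Icc 1 T, ∀ p ∈ Finset.Icc 1 P, 0 ≤ ℓ t p ∧ ℓ t p ≤ B)
    (w q : ℕ → ℕ → ℝ)
    (hw : ∀ t p, w t p = Real.exp (-(1 / η) * ∑ τ ∈ Finset.Icc 1 (t - 1), ℓ τ p))
    (hq : ∀ t p, q t p = w t p / ∑ p' ∈ Finset.Icc 1 P, w t p') :
    (∑ t ∈ Finset.Icc 1 T, ∑ p ∈ Finset.Icc 1 P, q t p * ℓ t p)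
      - ((Finset.Icc 1 P).inf' (Finset.nonempty_Icc.mpr hP)
          fun p => ∑ t ∈ Finset.Icc 1 T, ℓ t p) ≤
      (T : ℝ) * B ^ 2 / (8 * η) + η * Real.log P := by
  set s : ℝ := -(1 / η) with hs
  have hwpos : ∀ t p, 0 < w t p := fun t p => by rw [hw]; exact Real.exp_pos _
  set W : ℕ → ℝ := fun t => ∑ p' ∈ Finset.Icc 1 P, w t p' with hW
  have hPne : (Finset.Icc 1 P).Nonempty := Finset.nonempty_Icc.mpr hP
  have hWpos : ∀ t, 0 < W t := fun t =>
    Finset.sum_pos (fun p' _ => hwpos t p') hPne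
  have hqsum : ∀ t, ∑ p' ∈ Finset.Icc 1 P, q t p' = 1 := by
    intro t
    simp only [hq]
    rw [← Finset.sum_div, div_self (hWpos t).ne']
  have hq0 : ∀ t p', 0 ≤ q t p' := fun t p' => by
    rw [hq]; exact div_nonneg (hwpos t p').le (hWpos t).le
  -- one-round recursion
  have hwrec : ∀ t ∈ Finset.Icc 1 T, ∀ p', w (t + 1) p' = w t p' * Real.exp (s * ℓ t p') := by
    intro t ht p'
    rw [hw, hw]
    rw [← Real.exp_add]
    congr 1
    have h1 : 1 ≤ t := (Finset.mem_Icc.mp ht).1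
    have : t + 1 - 1 = (t - 1) + 1 := by omega
    rw [this, Finset.sum_Icc_succ_top (by omega)]
    have : t - 1 + 1 = t := by omega
    rw [this]; ring
  -- key per-round inequality
  have key : ∀ t ∈ Finset.Icc 1 T,
      Real.log (W (t + 1)) ≤ Real.log (W t)
        + s * (∑ p' ∈ Finset.Icc 1 P, q t p' * ℓ t p') + s ^ 2 * B ^ 2 / 8 := by
    intro t ht
    have hWrec : W (t + 1) = W t * ∑ p' ∈ Finset.Icc 1 P, q t p' * Real.exp (s * ℓ t p') := by
      rw [hW]
      simp only
      rw [Finset.mul_sum]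
      apply Finset.sum_congr rfl
      intro p' _
      rw [hwrec t ht p', hq]
      field_simp
      exact (mul_div_cancel_right₀ _ (hWpos t).ne').symm
    have hsumpos : 0 < ∑ p' ∈ Finset.Icc 1 P, q t p' * Real.exp (s * ℓ t p') := by
      have hh := hWpos (t + 1)
      rw [hWrec] at hh
      rcases mul_pos_iff.mp hh with ⟨_, h⟩ | ⟨h, _⟩
      · exact h
      · linarith [hWpos t]
    rw [hWrec, Real.log_mul (hWpos t).ne' hsumpos.ne']
    have hhoef := hoeffding_discrete (Finset.Icc 1 P) (q t) (ℓ t) B s hB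
      (fun p' _ => hq0 t p') (hqsum t) (fun p' hp' => hbound t ht p' hp') hedge_core
    linarith
  -- telescoping
  have tele : ∀ n : ℕ, n ≤ T →
      Real.log (W (n + 1)) ≤ Real.log (W 1)
        + s * (∑ t ∈ Finset.Icc 1 n, ∑ p' ∈ Finset.Icc 1 P, q t p' * ℓ t p')
        + (n : ℝ) * (s ^ 2 * B ^ 2 / 8) := by
    intro n
    induction n with
    | zero => intro _; simp
    | succ n ih =>
      intro hn
      have h1 := ih (by omega)
      have h2 := key (n + 1) (Finset.mem_Icc.mpr ⟨by omega, hn⟩)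
      rw [Finset.sum_Icc_succ_top (by omega : 1 ≤ n + 1)]
      push_cast
      linarith
  have hW1 : W 1 = (P : ℝ) := by
    rw [hW]
    simp only
    have : ∀ p' ∈ Finset.Icc 1 P, w 1 p' = 1 := by
      intro p' _
      rw [hw]
      simp
    rw [Finset.sum_congr rfl this]
    simp [Nat.card_Icc]
  -- lower bound on log W (T+1)
  obtain ⟨p', hp'mem, hp'eq⟩ := Finset.exists_mem_eq_inf' hPne
    (fun p => ∑ t ∈ Finset.Icc 1 T, ℓ t p)
  have hlow : s * (∑ t ∈ Finset.Icc 1 T, ℓ t p') ≤ Real.log (W (T + 1)) := by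
    have h1 : w (T + 1) p' ≤ W (T + 1) :=
      Finset.single_le_sum (fun p'' _ => (hwpos (T + 1) p'').le) hp'mem
    have h2 : Real.log (w (T + 1) p') = s * ∑ t ∈ Finset.Icc 1 T, ℓ t p' := by
      rw [hw]
      simp [Real.log_exp]
    rw [← h2]
    exact Real.log_le_log (hwpos _ _) h1
  have htele := tele T (le_refl T)
  rw [hW1] at htele
  rw [hp'eq]
  set Q := ∑ t ∈ Finset.Icc 1 T, ∑ p'' ∈ Finset.Icc 1 P, q t p'' * ℓ t p'' with hQ
  set L := ∑ t ∈ Finset.Icc 1 T, ℓ t p' with hL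
  -- from: s * L ≤ log P + s * Q + T * (s^2 B^2/8), with s = -(1/η)
  have hcomb : s * L ≤ Real.log P + s * Q + (T : ℝ) * (s ^ 2 * B ^ 2 / 8) := le_trans hlow htele
  have hmul := mul_le_mul_of_nonneg_left hcomb hη.le
  have hs2 : η * s = -1 := by rw [hs]; field_simp
  have hs3 : η * s ^ 2 = 1 / η := by rw [hs]; field_simp
  have hexp : η * (s * L) = -L := by rw [← mul_assoc, hs2]; ring
  have hexp2 : η * (Real.log P + s * Q + (T : ℝ) * (s ^ 2 * B ^ 2 / 8))
      = η * Real.log P + (-Q) + (T : ℝ) * B ^ 2 / (8 * η) := by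
    have : η * ((T : ℝ) * (s ^ 2 * B ^ 2 / 8)) = (T : ℝ) * B ^ 2 / (8 * η) := by
      rw [show η * ((T : ℝ) * (s ^ 2 * B ^ 2 / 8)) = (T:ℝ) * (η * s ^ 2) * B ^ 2 / 8 by ring,
        hs3]
      field_simp
    have h2 : η * (s * Q) = -Q := by rw [← mul_assoc, hs2]; ring
    calc η * (Real.log P + s * Q + (T : ℝ) * (s ^ 2 * B ^ 2 / 8))
        = η * Real.log P + η * (s * Q) + η * ((T : ℝ) * (s ^ 2 * B ^ 2 / 8)) := by ring
      _ = η * Real.log P + (-Q) + (T : ℝ) * B ^ 2 / (8 * η) := by rw [h2, this]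
  rw [hexp, hexp2] at hmul
  linarith
end

section
/- (Theorem 2, learning-accuracy part, non-asymptotic combined form) Fix integers T ≥ 1 and P ≥ 1 and reals η > 0, B ≥ 0, and R ∈ ℝ. Let y(t) ∈ ℝ, a(t,p) ∈ ℝ, and benchmark losses ℓ⋆(t,p) ∈ ℝ for t = 1,…,T, p = 1,…,P, and let L : ℝ × ℝ → ℝ be such that for every y ∈ ℝ the map u ↦ L(u, y) is convex. Set ℓ(t,p) = L(a(t,p), y(t)) and assume 0 ≤ ℓ(t,p) ≤ B for all t, p, and assume the per-kernel regret bound Σ_{t=1}^{T} ℓ(t,p) ≤ Σ_{t=1}^{T} ℓ⋆(t,p) + R for every p. Define the Hedge weights w(t,p) = exp(−(1/η)·Σ_{τ=1}^{t−1} ℓ(τ,p)) (so w(1,p) = 1) and q(t,p) = w(t,p) / Σ_{p'=1}^{P} w(t,p'). Then Σ_{t=1}^{T} L(Σ_{p=1}^{P} q(t,p)·a(t,p), y(t)) − min_{1≤p≤P} Σ_{t=1}^{T} ℓ⋆(t,p) ≤ R + T·B²/(8η) + η·log P. -/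
lemma domkl_core_ineq (m : ℝ) (hm0 : 0 ≤ m) (hm1 : m ≤ 1) (u : ℝ) (hu : 0 ≤ u) :
    1 - m + m * Real.exp (-u) ≤ Real.exp (-m * u + u ^ 2 / 8) := by
  set D : ℝ → ℝ := fun x => 1 - m + m * Real.exp (-x) with hDdef
  have hD : ∀ x, 0 < D x := by
    intro x
    rcases eq_or_lt_of_le hm0 with h | h
    · simp [hDdef, ← h]
    · rcases eq_or_lt_of_le hm1 with h1 | h1
      · have : D x = Real.exp (-x) := by simp [hDdef, h1]
        rw [this]; exact Real.exp_pos _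
      · have : 0 < 1 - m := by linarith
        have : 0 < m * Real.exp (-x) := mul_pos h (Real.exp_pos _)
        simp only [hDdef]; nlinarith
  set p : ℝ → ℝ := fun x => m * Real.exp (-x) / D x with hpdef
  have hDderiv : ∀ x, HasDerivAt D (-(m * Real.exp (-x))) x := by
    intro x
    have h1 : HasDerivAt (fun x : ℝ => Real.exp (-x)) (-Real.exp (-x)) x := by
      have := (Real.hasDerivAt_exp (-x)).comp x (hasDerivAt_neg x)
      simpa [Function.comp_def] using this
    have := ((h1.const_mul m).const_add (1 - m))
    simpa [hDdef, mul_comm] using this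
  set g : ℝ → ℝ := fun x => -m * x + x ^ 2 / 8 - Real.log (D x) with hgdef
  set g1 : ℝ → ℝ := fun x => -m + x / 4 + p x with hg1def
  have hgderiv : ∀ x, HasDerivAt g (g1 x) x := by
    intro x
    have hlog : HasDerivAt (fun x => Real.log (D x)) (-(m * Real.exp (-x)) / D x) x :=
      (hDderiv x).log (ne_of_gt (hD x))
    have h1 : HasDerivAt (fun x : ℝ => -m * x + x ^ 2 / 8) (-m + 2 * x / 8) x := by
      have := ((hasDerivAt_id x).const_mul (-m)).add
        (((hasDerivAt_pow 2 x)).div_const 8)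
      simpa [pow_one, Pi.add_def] using this
    have := h1.sub hlog
    refine this.congr_deriv ?_
    simp only [hg1def, hpdef]
    field_simp
    ring
  have hpderiv : ∀ x, HasDerivAt p (-(p x * (1 - p x))) x := by
    intro x
    have hnum : HasDerivAt (fun x : ℝ => m * Real.exp (-x)) (-(m * Real.exp (-x))) x := by
      have h1 : HasDerivAt (fun x : ℝ => Real.exp (-x)) (-Real.exp (-x)) x := by
        simpa [Function.comp_def] using (Real.hasDerivAt_exp (-x)).comp x (hasDerivAt_neg x)
      simpa [mul_comm] using h1.const_mul m
    have := hnum.div (hDderiv x) (ne_of_gt (hD x))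
    refine this.congr_deriv ?_
    have hne := ne_of_gt (hD x)
    have hDx : 1 - m + m * Real.exp (-x) = D x := rfl
    simp only [hpdef]
    field_simp
    ring
  have hg1deriv : ∀ x, HasDerivAt g1 (1 / 4 - p x * (1 - p x)) x := by
    intro x
    have := (((hasDerivAt_id x).div_const 4).const_add (-m)).add (hpderiv x)
    exact this.congr_deriv (by ring)
  have hg1mono : MonotoneOn g1 (Set.Ici (0 : ℝ)) := by
    apply monotoneOn_of_deriv_nonneg (convex_Ici 0)
    · exact fun x _ => (hg1deriv x).continuousAt.continuousWithinAt
    · exact fun x _ => ((hg1deriv x).differentiableAt).differentiableWithinAt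
    · intro x _
      rw [(hg1deriv x).deriv]
      nlinarith [sq_nonneg (p x - 1 / 2)]
  have hg1zero : g1 0 = 0 := by
    simp only [hg1def, hpdef, hDdef]
    simp
  have hg1nonneg : ∀ x, 0 ≤ x → 0 ≤ g1 x := by
    intro x hx
    have := hg1mono (Set.self_mem_Ici) (Set.mem_Ici.mpr hx) hx
    linarith [hg1zero ▸ this]
  have hgmono : MonotoneOn g (Set.Ici (0 : ℝ)) := by
    apply monotoneOn_of_deriv_nonneg (convex_Ici 0)
    · exact fun x _ => (hgderiv x).continuousAt.continuousWithinAt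
    · exact fun x _ => ((hgderiv x).differentiableAt).differentiableWithinAt
    · intro x hx
      rw [(hgderiv x).deriv]
      exact hg1nonneg x (le_of_lt (by simpa using hx))
  have hgzero : g 0 = 0 := by
    simp only [hgdef, hDdef]
    simp
  have hgu : 0 ≤ g u := by
    have := hgmono (Set.self_mem_Ici) (Set.mem_Ici.mpr hu) hu
    linarith [hgzero ▸ this]
  have hlog : Real.log (D u) ≤ -m * u + u ^ 2 / 8 := by
    simp only [hgdef] at hgu; linarith
  calc D u = Real.exp (Real.log (D u)) := (Real.exp_log (hD u)).symm
    _ ≤ Real.exp (-m * u + u ^ 2 / 8) := Real.exp_le_exp.mpr hlog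
lemma domkl_hoeffding {ι : Type*} (s : Finset ι) (q X : ι → ℝ) (c B : ℝ)
    (hc : 0 ≤ c) (hB : 0 ≤ B) (hq0 : ∀ i ∈ s, 0 ≤ q i) (hq1 : ∑ i ∈ s, q i = 1)
    (hX0 : ∀ i ∈ s, 0 ≤ X i) (hXB : ∀ i ∈ s, X i ≤ B) :
    ∑ i ∈ s, q i * Real.exp (-(c * X i)) ≤
      Real.exp (-(c * ∑ i ∈ s, q i * X i) + c ^ 2 * B ^ 2 / 8) := by
  set μ := ∑ i ∈ s, q i * X i with hμdef
  have hμ0 : 0 ≤ μ := Finset.sum_nonneg fun i hi => mul_nonneg (hq0 i hi) (hX0 i hi)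
  have hμB : μ ≤ B := by
    calc μ ≤ ∑ i ∈ s, q i * B :=
          Finset.sum_le_sum fun i hi => mul_le_mul_of_nonneg_left (hXB i hi) (hq0 i hi)
      _ = B := by rw [← Finset.sum_mul, hq1, one_mul]
  rcases eq_or_lt_of_le hB with hB0 | hBpos
  · -- B = 0 : all X i = 0, μ = 0
    have hX : ∀ i ∈ s, X i = 0 := fun i hi => le_antisymm (hB0 ▸ hXB i hi) (hX0 i hi)
    have hμ : μ = 0 := by
      rw [hμdef]
      exact Finset.sum_eq_zero fun i hi => by rw [hX i hi, mul_zero]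
    have : ∑ i ∈ s, q i * Real.exp (-(c * X i)) = 1 := by
      rw [← hq1]
      exact Finset.sum_congr rfl fun i hi => by rw [hX i hi, mul_zero, neg_zero,
        Real.exp_zero, mul_one]
    rw [this, hμ, ← hB0]
    simp
  · -- B > 0
    set m := μ / B with hmdef
    have hm0 : 0 ≤ m := div_nonneg hμ0 (le_of_lt hBpos)
    have hm1 : m ≤ 1 := (div_le_one hBpos).mpr hμB
    have hpt : ∀ i ∈ s, Real.exp (-(c * X i)) ≤
        (1 - X i / B) + (X i / B) * Real.exp (-(c * B)) := by
      intro i hi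
      have ha : 0 ≤ 1 - X i / B := by
        have := (div_le_one hBpos).mpr (hXB i hi); linarith
      have hb : 0 ≤ X i / B := div_nonneg (hX0 i hi) (le_of_lt hBpos)
      have hab : (1 - X i / B) + X i / B = 1 := by ring
      have := convexOn_exp.2 (Set.mem_univ (0 : ℝ)) (Set.mem_univ (-(c * B)))
        ha hb hab
      simp only [smul_eq_mul, mul_zero, zero_add, Real.exp_zero, mul_one] at this
      have harg : X i / B * -(c * B) = -(c * X i) := by
        field_simp
      rw [harg] at this
      linarith
    calc ∑ i ∈ s, q i * Real.exp (-(c * X i))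
        ≤ ∑ i ∈ s, q i * ((1 - X i / B) + (X i / B) * Real.exp (-(c * B))) :=
          Finset.sum_le_sum fun i hi =>
            mul_le_mul_of_nonneg_left (hpt i hi) (hq0 i hi)
      _ = 1 - m + m * Real.exp (-(c * B)) := by
          simp only [mul_add, mul_sub, mul_one, Finset.sum_add_distrib, Finset.sum_sub_distrib]
          rw [hq1, hmdef]
          have h1 : ∑ i ∈ s, q i * (X i / B) = μ / B := by
            rw [hμdef, Finset.sum_div]
            exact Finset.sum_congr rfl fun i hi => by ring
          have h2 : ∑ i ∈ s, q i * (X i / B * Real.exp (-(c * B)))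
              = (∑ i ∈ s, q i * (X i / B)) * Real.exp (-(c * B)) := by
            rw [Finset.sum_mul]
            exact Finset.sum_congr rfl fun i hi => by ring
          rw [h2, h1]
      _ ≤ Real.exp (-m * (c * B) + (c * B) ^ 2 / 8) :=
          domkl_core_ineq m hm0 hm1 (c * B) (mul_nonneg hc (le_of_lt hBpos))
      _ = Real.exp (-(c * μ) + c ^ 2 * B ^ 2 / 8) := by
          congr 1
          rw [hmdef]
          field_simp

/-- Theorem 2 of the paper, learning-accuracy part, non-asymptotic combined form. -/
theorem domkl_thm2_accuracy
    (T P : ℕ) (hT : 1 ≤ T) (hP : 1 ≤ P)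
    (η B R : ℝ) (hη : 0 < η) (hB : 0 ≤ B)
    (y : ℕ → ℝ) (a : ℕ → ℕ → ℝ) (ℓstar : ℕ → ℕ → ℝ)
    (L : ℝ → ℝ → ℝ)
    (hconv : ∀ yy : ℝ, ConvexOn ℝ Set.univ fun u => L u yy)
    (ℓ : ℕ → ℕ → ℝ)
    (hℓ : ∀ t p, ℓ t p = L (a t p) (y t))
    (hbound : ∀ t ∈ Finset.Icc 1 T, ∀ p ∈ Finset.Icc 1 P, 0 ≤ ℓ t p ∧ ℓ t p ≤ B)
    (hregret : ∀ p ∈ Finset.Icc 1 P,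
      ∑ t ∈ Finset.Icc 1 T, ℓ t p ≤ (∑ t ∈ Finset.Icc 1 T, ℓstar t p) + R)
    (w q : ℕ → ℕ → ℝ)
    (hw : ∀ t p, w t p = Real.exp (-(1 / η) * ∑ τ ∈ Finset.Icc 1 (t - 1), ℓ τ p))
    (hq : ∀ t p, q t p = w t p / ∑ p' ∈ Finset.Icc 1 P, w t p') :
    (∑ t ∈ Finset.Icc 1 T, L (∑ p ∈ Finset.Icc 1 P, q t p * a t p) (y t))
      - ((Finset.Icc 1 P).inf' (Finset.nonempty_Icc.mpr hP)
          fun p => ∑ t ∈ Finset.Icc 1 T, ℓstar t p) ≤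
      R + (T : ℝ) * B ^ 2 / (8 * η) + η * Real.log P := by
  have hSne : (Finset.Icc 1 P).Nonempty := Finset.nonempty_Icc.mpr hP
  have hwpos : ∀ t p, 0 < w t p := fun t p => by rw [hw]; exact Real.exp_pos _
  have hWpos : ∀ t, 0 < ∑ p' ∈ Finset.Icc 1 P, w t p' :=
    fun t => Finset.sum_pos (fun p _ => hwpos t p) hSne
  have hq0 : ∀ t p, 0 ≤ q t p := fun t p => by
    rw [hq]; exact le_of_lt (div_pos (hwpos t p) (hWpos t))
  have hq1 : ∀ t, ∑ p ∈ Finset.Icc 1 P, q t p = 1 := by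
    intro t
    simp only [hq]
    rw [← Finset.sum_div, div_self (ne_of_gt (hWpos t))]
  -- Jensen per round
  have hjensen : ∀ t ∈ Finset.Icc 1 T,
      L (∑ p ∈ Finset.Icc 1 P, q t p * a t p) (y t)
        ≤ ∑ p ∈ Finset.Icc 1 P, q t p * ℓ t p := by
    intro t _
    have h := (hconv (y t)).map_sum_le (fun p _ => hq0 t p) (hq1 t)
      (fun p _ => Set.mem_univ (a t p))
    simp only [smul_eq_mul] at h
    refine h.trans_eq ?_
    exact Finset.sum_congr rfl fun p _ => by rw [hℓ]
  -- per-round exponential weight bound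
  set E : ℕ → ℝ := fun t =>
    -((1 / η) * ∑ p ∈ Finset.Icc 1 P, q t p * ℓ t p) + (1 / η) ^ 2 * B ^ 2 / 8 with hEdef
  have hstep : ∀ t ∈ Finset.Icc 1 T,
      ∑ p ∈ Finset.Icc 1 P, w (t + 1) p
        ≤ (∑ p ∈ Finset.Icc 1 P, w t p) * Real.exp (E t) := by
    intro t ht
    obtain ⟨ht1, _⟩ := Finset.mem_Icc.mp ht
    have hrec : ∀ p, w (t + 1) p = w t p * Real.exp (-((1 / η) * ℓ t p)) := by
      intro p
      rw [hw, hw, ← Real.exp_add]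
      congr 1
      have h0 : t + 1 - 1 = t := by omega
      rw [h0]
      have h1 : ∑ τ ∈ Finset.Icc 1 (t - 1 + 1), ℓ τ p
          = (∑ τ ∈ Finset.Icc 1 (t - 1), ℓ τ p) + ℓ (t - 1 + 1) p :=
        Finset.sum_Icc_succ_top (by omega) _
      have h2 : t - 1 + 1 = t := by omega
      rw [h2] at h1
      rw [h1]
      ring
    calc ∑ p ∈ Finset.Icc 1 P, w (t + 1) p
        = ∑ p ∈ Finset.Icc 1 P, w t p * Real.exp (-((1 / η) * ℓ t p)) :=
          Finset.sum_congr rfl fun p _ => hrec p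
      _ = (∑ p' ∈ Finset.Icc 1 P, w t p') *
            ∑ p ∈ Finset.Icc 1 P, q t p * Real.exp (-((1 / η) * ℓ t p)) := by
          rw [Finset.mul_sum]
          refine Finset.sum_congr rfl fun p _ => ?_
          rw [hq]
          field_simp [ne_of_gt (hWpos t)]
      _ ≤ (∑ p' ∈ Finset.Icc 1 P, w t p') * Real.exp (E t) := by
          refine mul_le_mul_of_nonneg_left ?_ (le_of_lt (hWpos t))
          exact domkl_hoeffding (Finset.Icc 1 P) (q t) (ℓ t) (1 / η) B
            (by positivity) hB (fun p _ => hq0 t p) (hq1 t)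
            (fun p hp => (hbound t ht p hp).1) (fun p hp => (hbound t ht p hp).2)
  -- iterate
  have hiter : ∀ n, n ≤ T → ∑ p ∈ Finset.Icc 1 P, w (n + 1) p
      ≤ (P : ℝ) * Real.exp (∑ t ∈ Finset.Icc 1 n, E t) := by
    intro n
    induction n with
    | zero =>
      intro _
      have hw1 : ∀ p, w 1 p = 1 := by
        intro p
        rw [hw]
        norm_num
      rw [Finset.sum_congr rfl fun p _ => hw1 p]
      simp [Nat.card_Icc]
    | succ n ih =>
      intro hn
      have hmem : n + 1 ∈ Finset.Icc 1 T := Finset.mem_Icc.mpr ⟨by omega, hn⟩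
      calc ∑ p ∈ Finset.Icc 1 P, w (n + 1 + 1) p
          ≤ (∑ p ∈ Finset.Icc 1 P, w (n + 1) p) * Real.exp (E (n + 1)) :=
            hstep (n + 1) hmem
        _ ≤ ((P : ℝ) * Real.exp (∑ t ∈ Finset.Icc 1 n, E t)) * Real.exp (E (n + 1)) :=
            mul_le_mul_of_nonneg_right (ih (by omega)) (Real.exp_nonneg _)
        _ = (P : ℝ) * Real.exp (∑ t ∈ Finset.Icc 1 (n + 1), E t) := by
            rw [Finset.sum_Icc_succ_top (by omega : 1 ≤ n + 1) E,
              Real.exp_add (∑ k ∈ Finset.Icc 1 n, E k) (E (n + 1)), mul_assoc]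
  obtain ⟨pstar, hpmem, hpeq⟩ :=
    Finset.exists_mem_eq_inf' hSne (fun p => ∑ t ∈ Finset.Icc 1 T, ℓstar t p)
  have hlower : Real.exp (-(1 / η) * ∑ τ ∈ Finset.Icc 1 T, ℓ τ pstar)
      ≤ ∑ p ∈ Finset.Icc 1 P, w (T + 1) p := by
    have h1 : w (T + 1) pstar
        = Real.exp (-(1 / η) * ∑ τ ∈ Finset.Icc 1 T, ℓ τ pstar) := by
      rw [hw]
      norm_num
    rw [← h1]
    exact Finset.single_le_sum (fun p _ => (hwpos (T + 1) p).le) hpmem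
  have hexp : Real.exp (-(1 / η) * ∑ τ ∈ Finset.Icc 1 T, ℓ τ pstar)
      ≤ (P : ℝ) * Real.exp (∑ t ∈ Finset.Icc 1 T, E t) :=
    hlower.trans (hiter T le_rfl)
  have hPpos : (0 : ℝ) < (P : ℝ) := by exact_mod_cast hP
  have hlog : -(1 / η) * ∑ τ ∈ Finset.Icc 1 T, ℓ τ pstar
      ≤ Real.log P + ∑ t ∈ Finset.Icc 1 T, E t := by
    have h := Real.log_le_log (Real.exp_pos _) hexp
    rwa [Real.log_exp, Real.log_mul (ne_of_gt hPpos) (Real.exp_ne_zero _),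
      Real.log_exp] at h
  -- sum of E
  set A := ∑ t ∈ Finset.Icc 1 T, ∑ p ∈ Finset.Icc 1 P, q t p * ℓ t p with hAdef
  have hE : ∑ t ∈ Finset.Icc 1 T, E t
      = -((1 / η) * A) + (T : ℝ) * ((1 / η) ^ 2 * B ^ 2 / 8) := by
    simp only [hEdef]
    rw [Finset.sum_add_distrib, Finset.sum_const, Nat.card_Icc, nsmul_eq_mul]
    have h1 : ∑ t ∈ Finset.Icc 1 T,
        -((1 / η) * ∑ p ∈ Finset.Icc 1 P, q t p * ℓ t p) = -((1 / η) * A) := by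
      rw [hAdef, Finset.mul_sum]
      exact Finset.sum_neg_distrib (f := fun t => (1 / η) * ∑ p ∈ Finset.Icc 1 P, q t p * ℓ t p)
    rw [h1]
    norm_num
  set Lp := ∑ τ ∈ Finset.Icc 1 T, ℓ τ pstar with hLpdef
  have hmain : A - Lp ≤ η * Real.log P + (T : ℝ) * B ^ 2 / (8 * η) := by
    rw [hE] at hlog
    have h3 := mul_le_mul_of_nonneg_left hlog hη.le
    have e1 : η * (-(1 / η) * Lp) = -Lp := by
      field_simp
    have e2 : η * (Real.log P + (-((1 / η) * A) + (T : ℝ) * ((1 / η) ^ 2 * B ^ 2 / 8)))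
        = η * Real.log P - A + (T : ℝ) * B ^ 2 / (8 * η) := by
      field_simp
      ring
    rw [e1, e2] at h3
    linarith
  have hjs : ∑ t ∈ Finset.Icc 1 T, L (∑ p ∈ Finset.Icc 1 P, q t p * a t p) (y t) ≤ A :=
    Finset.sum_le_sum hjensen
  have hreg := hregret pstar hpmem
  rw [hpeq]
  linarith
end
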